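/- arXiv:2507.14362 — 5 statements merged into one kernel-verified Lean document; each statement's English description precedes it below -/
import Mathlib

section
/- Let n ≥ 2, p ∈ (0,1], and let A = sup_{z>0} (z+1)|1/(e^z-1) - 1/z| < ∞. For x₁,…,xₙ ∈ [0,1] with s = Σᵢ xᵢ > 0 and sⱼ = s - xⱼ > 0 for each j, one has ∏_{j=1}^n F(sⱼ p) ≤ e^A · F(sp)^n, where F(z) = (1-e^{-z})/z. -/
open Real

noncomputable def F (z : ℝ) : ℝ := (1 - Real.exp (-z)) / z

/-- The constant `A = sup_{z>0} (z+1)|1/(e^z-1) - 1/z|`. -/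
noncomputable def Aconst : ℝ :=
  sSup {y : ℝ | ∃ z : ℝ, 0 < z ∧ y = (z + 1) * |1 / (Real.exp z - 1) - 1 / z|}

lemma expz_gt {z : ℝ} (hz : 0 < z) : z + 1 < Real.exp z := by
  simpa using Real.add_one_lt_exp hz.ne'

lemma F_pos {z : ℝ} (hz : 0 < z) : 0 < F z := by
  have h : Real.exp (-z) < 1 := by
    rw [Real.exp_lt_one_iff]; linarith
  exact div_pos (by linarith) hz

lemma g_le_two {z : ℝ} (hz : 0 < z) :
    (z + 1) * |1 / (Real.exp z - 1) - 1 / z| ≤ 2 := by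
  have hE : z + 1 < Real.exp z := expz_gt hz
  have hE1 : 0 < Real.exp z - 1 := by linarith
  have hlt : 1 / (Real.exp z - 1) < 1 / z := by
    apply one_div_lt_one_div_of_lt hz; linarith
  rw [abs_of_nonpos (by linarith), neg_sub]
  have hinvE : 0 < 1 / (Real.exp z - 1) := by positivity
  rcases le_or_gt 1 z with h1 | h1
  · have hzi : z * (1 / z) = 1 := mul_one_div_cancel hz.ne'
    have hzi2 : 1 / z ≤ 1 := by
      rw [div_le_one hz]; linarith
    nlinarith
  · -- z < 1 : use exp z ≤ 1/(1-z)
    have hkey : Real.exp z * (1 - z) ≤ 1 := by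
      have h2 : 1 - z ≤ Real.exp (-z) := by
        have := Real.add_one_le_exp (-z); linarith
      calc Real.exp z * (1 - z) ≤ Real.exp z * Real.exp (-z) := by
            apply mul_le_mul_of_nonneg_left h2 (Real.exp_pos z).le
        _ = 1 := by rw [← Real.exp_add]; simp
    have hfrac : (1 - z) / z ≤ 1 / (Real.exp z - 1) := by
      rw [div_le_div_iff₀ hz hE1]
      nlinarith
    have hmain : 1 / z - 1 / (Real.exp z - 1) ≤ 1 := by
      have : 1 / z - (1 - z) / z = 1 := by field_simp; ring
      linarith
    nlinarith

lemma Aconst_bdd : BddAbove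
    {y : ℝ | ∃ z : ℝ, 0 < z ∧ y = (z + 1) * |1 / (Real.exp z - 1) - 1 / z|} := by
  refine ⟨2, ?_⟩
  rintro y ⟨z, hz, rfl⟩
  exact g_le_two hz

lemma le_Aconst {z : ℝ} (hz : 0 < z) :
    (z + 1) * |1 / (Real.exp z - 1) - 1 / z| ≤ Aconst :=
  le_csSup Aconst_bdd ⟨z, hz, rfl⟩

lemma Aconst_nonneg : 0 ≤ Aconst :=
  le_trans (by positivity) (le_Aconst one_pos)

lemma hasDerivAt_logF {z : ℝ} (hz : 0 < z) :
    HasDerivAt (fun t => Real.log (F t)) (1 / (Real.exp z - 1) - 1 / z) z := by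
  have hlt : Real.exp (-z) < 1 := by rw [Real.exp_lt_one_iff]; linarith
  have hpos : 0 < 1 - Real.exp (-z) := by linarith
  have h1 : HasDerivAt (fun t : ℝ => 1 - Real.exp (-t)) (Real.exp (-z)) z := by
    have h := ((Real.hasDerivAt_exp (-z)).comp z (hasDerivAt_neg z))
    have h2 := (hasDerivAt_const z (1 : ℝ)).sub h
    simpa [Pi.sub_def, Function.comp_def] using h2
  have h2 : HasDerivAt (fun t => Real.log (1 - Real.exp (-t)))
      (Real.exp (-z) / (1 - Real.exp (-z))) z := h1.log hpos.ne'
  have h3 : HasDerivAt (fun t : ℝ => Real.log t) (1 / z) z := by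
    simpa [one_div] using Real.hasDerivAt_log hz.ne'
  have h4 := h2.sub h3
  have heq : (fun t => Real.log (F t)) =ᶠ[nhds z]
      (fun t => Real.log (1 - Real.exp (-t)) - Real.log t) := by
    filter_upwards [Ioi_mem_nhds hz] with t ht
    have ht0 : (0 : ℝ) < t := ht
    have hlt' : Real.exp (-t) < 1 := by rw [Real.exp_lt_one_iff]; linarith
    rw [F, Real.log_div (by linarith) ht0.ne']
  have h5 := h4.congr_of_eventuallyEq heq
  have hval : Real.exp (-z) / (1 - Real.exp (-z)) = 1 / (Real.exp z - 1) := by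
    have hE : z + 1 < Real.exp z := expz_gt hz
    rw [Real.exp_neg]
    field_simp
  rw [hval] at h5
  exact h5

lemma hasDerivAt_H {z : ℝ} (hz : 0 < z) :
    HasDerivAt (fun t => Real.log (F t) + Aconst * Real.log (t + 1))
      ((1 / (Real.exp z - 1) - 1 / z) + Aconst * (1 / (z + 1))) z := by
  have h1 := hasDerivAt_logF hz
  have h2 : HasDerivAt (fun t : ℝ => Real.log (t + 1)) (1 / (z + 1)) z := by
    have ha : HasDerivAt (fun t : ℝ => t + 1) 1 z := (hasDerivAt_id z).add_const 1
    have := ha.log (by linarith : z + 1 ≠ 0)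
    simpa [one_div] using this
  exact h1.add (h2.const_mul Aconst)

lemma H_mono : MonotoneOn (fun t => Real.log (F t) + Aconst * Real.log (t + 1))
    (Set.Ioi (0 : ℝ)) := by
  apply monotoneOn_of_deriv_nonneg (convex_Ioi 0)
  · intro t ht
    exact (hasDerivAt_H ht).continuousAt.continuousWithinAt
  · intro t ht
    rw [interior_Ioi] at ht
    exact (hasDerivAt_H ht).differentiableAt.differentiableWithinAt
  · intro t ht
    rw [interior_Ioi] at ht
    have ht0 : (0 : ℝ) < t := ht
    rw [(hasDerivAt_H ht0).deriv]
    have hb := le_Aconst ht0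
    have habs : |1 / (Real.exp t - 1) - 1 / t| ≤ Aconst / (t + 1) := by
      rw [le_div_iff₀ (by linarith)]
      linarith [hb]
    have := neg_abs_le (1 / (Real.exp t - 1) - 1 / t)
    have hA : Aconst * (1 / (t + 1)) = Aconst / (t + 1) := by ring
    rw [hA]
    linarith

/-- For `n ≥ 2`, `p ∈ (0,1]`, and `x₁,…,xₙ ∈ [0,1]` with `s = Σᵢ xᵢ > 0` and
`sⱼ = s - xⱼ > 0` for each `j`, one has `∏ⱼ F(sⱼ p) ≤ e^A · F(sp)^n`. -/
theorem prod_F_le (n : ℕ) (hn : 2 ≤ n) (p : ℝ) (hp : p ∈ Set.Ioc (0 : ℝ) 1)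
    (x : Fin n → ℝ) (hx : ∀ i, x i ∈ Set.Icc (0 : ℝ) 1)
    (s : ℝ) (hs : s = ∑ i, x i) (hspos : 0 < s)
    (hsj : ∀ j, 0 < s - x j) :
    ∏ j, F ((s - x j) * p) ≤ Real.exp Aconst * (F (s * p)) ^ n := by
  obtain ⟨hp0, hp1⟩ := hp
  have hFpos : ∀ j, 0 < F ((s - x j) * p) := fun j => F_pos (mul_pos (hsj j) hp0)
  have hsp : 0 < s * p := mul_pos hspos hp0
  have hFsp : 0 < F (s * p) := F_pos hsp
  have key : ∀ j, Real.log (F ((s - x j) * p)) ≤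
      Real.log (F (s * p)) + Aconst * (x j / s) := by
    intro j
    have hx0 := (hx j).1
    have hx1 := (hx j).2
    have ha : 0 < (s - x j) * p := mul_pos (hsj j) hp0
    have hab : (s - x j) * p ≤ s * p := by nlinarith
    have hH := H_mono (Set.mem_Ioi.mpr ha) (Set.mem_Ioi.mpr hsp) hab
    simp only at hH
    have hlog : Real.log (s * p + 1) - Real.log ((s - x j) * p + 1) ≤ x j / s := by
      rw [← Real.log_div (by positivity) (by positivity)]
      have h1 : Real.log ((s * p + 1) / ((s - x j) * p + 1)) ≤
          (s * p + 1) / ((s - x j) * p + 1) - 1 :=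
        Real.log_le_sub_one_of_pos (by positivity)
      have h2 : (s * p + 1) / ((s - x j) * p + 1) - 1
          = (x j * p) / ((s - x j) * p + 1) := by
        rw [div_sub_one (by linarith : 0 < (s - x j) * p + 1).ne']
        congr 1
        ring
      have h3 : (x j * p) / ((s - x j) * p + 1) ≤ x j / s := by
        rw [div_le_div_iff₀ (by positivity) hspos]
        nlinarith
      linarith
    nlinarith [mul_le_mul_of_nonneg_left hlog Aconst_nonneg]
  have hsum1 : ∑ j, x j / s = 1 := by
    rw [← Finset.sum_div, ← hs, div_self hspos.ne']
  have hsum : ∑ j, Real.log (F ((s - x j) * p)) ≤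
      n * Real.log (F (s * p)) + Aconst := by
    calc ∑ j, Real.log (F ((s - x j) * p))
        ≤ ∑ j : Fin n, (Real.log (F (s * p)) + Aconst * (x j / s)) :=
          Finset.sum_le_sum fun j _ => key j
      _ = n * Real.log (F (s * p)) + Aconst * ∑ j, x j / s := by
          rw [Finset.sum_add_distrib, Finset.sum_const, ← Finset.mul_sum]
          simp [mul_comm]
      _ = n * Real.log (F (s * p)) + Aconst := by rw [hsum1, mul_one]
  have hprod : ∏ j, F ((s - x j) * p)
      = Real.exp (∑ j, Real.log (F ((s - x j) * p))) := by
    rw [Real.exp_sum]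
    exact Finset.prod_congr rfl fun j _ => (Real.exp_log (hFpos j)).symm
  rw [hprod]
  calc Real.exp (∑ j, Real.log (F ((s - x j) * p)))
      ≤ Real.exp (n * Real.log (F (s * p)) + Aconst) := Real.exp_le_exp.mpr hsum
    _ = Real.exp Aconst * (F (s * p)) ^ n := by
        rw [Real.exp_add, Real.exp_nat_mul, Real.exp_log hFsp, mul_comm]
end

section
/- The density of the sum S_ℓ of ℓ i.i.d. uniform [0,1] random variables equals f_ℓ(s) = (s^{ℓ-1}/(ℓ-1)!) · P(max_{j∈[ℓ]} L_j ≤ 1/s), where (L₁,…,L_ℓ) are the lengths of the ℓ consecutive intervals obtained by choosing ℓ-1 points independently and uniformly at random in [0,1]. -/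
open MeasureTheory
open scoped ENNReal

/-- The sorted tuple of the points `u`. -/
noncomputable def sortedPts {m : ℕ} (u : Fin m → ℝ) : Fin m → ℝ := u ∘ Tuple.sort u

/-- The `ℓ = m+1` spacings (consecutive gaps, including endpoints `0` and `1`) determined
by `m` points in `[0,1]`. -/
noncomputable def spacing {m : ℕ} (u : Fin m → ℝ) (j : Fin (m + 1)) : ℝ :=
  (if h : (j : ℕ) < m then sortedPts u ⟨j, h⟩ else 1) -
    (if h2 : 0 < (j : ℕ) then sortedPts u ⟨(j : ℕ) - 1, by have := j.isLt; omega⟩ else 0)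

/-- The maximal spacing. -/
noncomputable def maxSpacing {m : ℕ} (u : Fin m → ℝ) : ℝ :=
  Finset.univ.sup' ⟨0, Finset.mem_univ 0⟩ (spacing u)

namespace IrwinHallAux

open Set Finset

variable {m : ℕ}

/-! ### gaps of a presorted tuple -/

noncomputable def gap (v : Fin m → ℝ) (j : Fin (m + 1)) : ℝ :=
  (if h : (j : ℕ) < m then v ⟨j, h⟩ else 1) -
    (if h2 : 0 < (j : ℕ) then v ⟨(j : ℕ) - 1, by have := j.isLt; omega⟩ else 0)

lemma spacing_eq_gap (u : Fin m → ℝ) (j : Fin (m + 1)) :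
    spacing u j = gap (sortedPts u) j := rfl

lemma sum_gap (v : Fin m → ℝ) : ∑ j : Fin (m + 1), gap v j = 1 := by
  set F : ℕ → ℝ := fun k => if h : 0 < k ∧ k - 1 < m then v ⟨k - 1, h.2⟩ else if k = 0 then 0 else 1 with hF
  have key : ∀ j : Fin (m + 1), gap v j = F ((j : ℕ) + 1) - F (j : ℕ) := by
    intro j
    have hj := j.isLt
    unfold gap
    congr 1
    · by_cases h : (j : ℕ) < m
      · rw [dif_pos h, hF]
        simp only []
        rw [dif_pos ⟨Nat.succ_pos _, by simpa using h⟩]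
        congr 1
      · rw [dif_neg h, hF]
        simp only []
        rw [dif_neg (by omega), if_neg (by omega)]
    · by_cases h : 0 < (j : ℕ)
      · rw [dif_pos h, hF]
        simp only []
        rw [dif_pos ⟨h, by omega⟩]
      · rw [dif_neg h, hF]
        simp only []
        rw [dif_neg (by omega), if_pos (by omega)]
  calc ∑ j : Fin (m + 1), gap v j = ∑ j : Fin (m+1), (F ((j:ℕ)+1) - F (j:ℕ)) := by
        exact Finset.sum_congr rfl fun j _ => key j
    _ = ∑ k ∈ Finset.range (m+1), (F (k+1) - F k) :=
        Fin.sum_univ_eq_sum_range (fun k => F (k+1) - F k) (m+1)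
    _ = F (m+1) - F 0 := Finset.sum_range_sub F (m+1)
    _ = 1 := by rw [hF]; simp

lemma le_maxSpacing (u : Fin m → ℝ) (j : Fin (m + 1)) : spacing u j ≤ maxSpacing u :=
  Finset.le_sup' _ (Finset.mem_univ j)

lemma sum_spacing (u : Fin m → ℝ) : ∑ j : Fin (m + 1), spacing u j = 1 :=
  sum_gap (sortedPts u)

lemma maxSpacing_pos (u : Fin m → ℝ) : 0 < maxSpacing u := by
  by_contra h
  push_neg at h
  have : (1 : ℝ) ≤ 0 := by
    rw [← sum_spacing u]
    calc ∑ j : Fin (m + 1), spacing u j ≤ ∑ j : Fin (m+1), (0:ℝ) :=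
          Finset.sum_le_sum fun j _ => (le_maxSpacing u j).trans h
      _ = 0 := by simp
  linarith

lemma sortedPts_comp_perm (u : Fin m → ℝ) (σ : Equiv.Perm (Fin m)) :
    sortedPts (u ∘ σ) = sortedPts u := Tuple.comp_perm_comp_sort_eq_comp_sort

lemma sortedPts_of_monotone {u : Fin m → ℝ} (h : Monotone u) : sortedPts u = u := by
  have := (Tuple.comp_sort_eq_comp_iff_monotone (f := u) (σ := 1)).mpr (by simpa using h)
  simpa [sortedPts] using this.symm

/-! ### the cube and the density -/

def cube (m : ℕ) : Set (Fin m → ℝ) := Set.univ.pi fun _ => Set.Icc (0 : ℝ) 1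

lemma measurableSet_cube : MeasurableSet (cube m) :=
  MeasurableSet.univ_pi fun _ => measurableSet_Icc

lemma pi_restrict_eq :
    (Measure.pi fun _ : Fin m => volume.restrict (Set.Icc (0 : ℝ) 1)) =
      (volume : Measure (Fin m → ℝ)).restrict (cube m) := by
  refine Measure.pi_eq fun s hs => ?_
  rw [Measure.restrict_apply (MeasurableSet.univ_pi hs)]
  have : Set.univ.pi s ∩ cube m = Set.univ.pi fun i => s i ∩ Set.Icc (0:ℝ) 1 := by
    rw [cube, ← Set.pi_inter_distrib]
  rw [this, volume_pi, Measure.pi_pi]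
  exact Finset.prod_congr rfl fun i _ => (Measure.restrict_apply (hs i)).symm

noncomputable def dens (m : ℕ) (s : ℝ) : ℝ≥0∞ :=
  (Measure.pi fun _ : Fin m => volume.restrict (Set.Icc (0 : ℝ) 1))
    {x | s - 1 ≤ ∑ i, x i ∧ ∑ i, x i ≤ s}

lemma measurable_dens : Measurable (dens m) := by
  have hS : MeasurableSet {q : (Fin m → ℝ) × ℝ | q.2 - 1 ≤ ∑ i, q.1 i ∧ ∑ i, q.1 i ≤ q.2} := by
    have hsum : Measurable fun q : (Fin m → ℝ) × ℝ => ∑ i, q.1 i :=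
      Finset.measurable_sum _ fun i _ => (measurable_pi_apply i).comp measurable_fst
    exact (measurableSet_le (measurable_snd.sub measurable_const) hsum).inter
      (measurableSet_le hsum measurable_snd)
  have := measurable_measure_prodMk_right
    (μ := (Measure.pi fun _ : Fin m => volume.restrict (Set.Icc (0 : ℝ) 1))) hS
  exact this

/-! ### pushforward of the product measure under the sum -/

lemma map_sum_eq :
    Measure.map (fun x : Fin (m + 1) → ℝ => ∑ i, x i)
        (Measure.pi fun _ : Fin (m + 1) => volume.restrict (Set.Icc (0 : ℝ) 1)) =
      (volume : Measure ℝ).withDensity (dens m) := by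
  set ν : Measure ℝ := volume.restrict (Set.Icc (0 : ℝ) 1) with hν
  have hνfin : IsFiniteMeasure ν := by
    constructor
    rw [hν, Measure.restrict_apply_univ, Real.volume_Icc]
    simp
  set μm : Measure (Fin m → ℝ) := Measure.pi fun _ => ν with hμm
  have hμmfin : IsFiniteMeasure μm := inferInstance
  have hsum_m : Measurable fun x : Fin m → ℝ => ∑ i, x i :=
    Finset.measurable_sum _ fun i _ => measurable_pi_apply i
  have hg' : Measurable fun q : (Fin m → ℝ) × ℝ => q.2 + ∑ i, q.1 i :=
    measurable_snd.add (hsum_m.comp measurable_fst)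
  have hS : MeasurableSet {q : (Fin m → ℝ) × ℝ | q.2 - 1 ≤ ∑ i, q.1 i ∧ ∑ i, q.1 i ≤ q.2} := by
    have hsum : Measurable fun q : (Fin m → ℝ) × ℝ => ∑ i, q.1 i := hsum_m.comp measurable_fst
    exact (measurableSet_le (measurable_snd.sub measurable_const) hsum).inter
      (measurableSet_le hsum measurable_snd)
  have step1 : Measure.map (fun x : Fin (m + 1) → ℝ => ∑ i, x i)
      (Measure.pi fun _ : Fin (m + 1) => volume.restrict (Set.Icc (0 : ℝ) 1)) =
      Measure.map (fun q : (Fin m → ℝ) × ℝ => q.2 + ∑ i, q.1 i) (μm.prod ν) := by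
    have hmp : MeasurePreserving (MeasurableEquiv.piFinSuccAbove (fun _ : Fin (m+1) => ℝ) 0)
        (Measure.pi fun _ : Fin (m + 1) => ν) (ν.prod μm) :=
      measurePreserving_piFinSuccAbove (fun _ : Fin (m+1) => ν) 0
    have hcomp : (fun x : Fin (m + 1) → ℝ => ∑ i, x i) =
        (fun p : ℝ × (Fin m → ℝ) => p.1 + ∑ i, p.2 i) ∘
          (MeasurableEquiv.piFinSuccAbove (fun _ : Fin (m+1) => ℝ) 0) := by
      funext x
      simp only [Function.comp_apply, MeasurableEquiv.piFinSuccAbove_apply]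
      exact Fin.sum_univ_succAbove x 0
    rw [hcomp, ← Measure.map_map (by fun_prop) (MeasurableEquiv.measurable _), hmp.map_eq,
      ← Measure.prod_swap, Measure.map_map (by fun_prop) measurable_swap]
    rfl
  rw [step1]
  refine Measure.ext fun E hE => ?_
  rw [Measure.map_apply hg' hE, Measure.prod_apply (hg' hE), withDensity_apply _ hE]
  have slice : ∀ x : Fin m → ℝ,
      ν (Prod.mk x ⁻¹' ((fun q : (Fin m → ℝ) × ℝ => q.2 + ∑ i, q.1 i) ⁻¹' E)) =
        ∫⁻ s in E, ({q : (Fin m → ℝ) × ℝ | q.2 - 1 ≤ ∑ i, q.1 i ∧ ∑ i, q.1 i ≤ q.2}.indicator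
          (fun _ => (1:ℝ≥0∞)) (x, s)) := by
    intro x
    have h1 : (Prod.mk x ⁻¹' ((fun q : (Fin m → ℝ) × ℝ => q.2 + ∑ i, q.1 i) ⁻¹' E)) =
        (fun t : ℝ => t + ∑ i, x i) ⁻¹' E := rfl
    have h2 : ν ((fun t : ℝ => t + ∑ i, x i) ⁻¹' E) =
        volume (E ∩ Set.Icc (∑ i, x i) (∑ i, x i + 1)) := by
      rw [hν, Measure.restrict_apply (by exact (measurable_add_const _) hE)]
      have : (fun t : ℝ => t + ∑ i, x i) ⁻¹' E ∩ Set.Icc 0 1 =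
          (fun t : ℝ => t + ∑ i, x i) ⁻¹' (E ∩ Set.Icc (∑ i, x i) (∑ i, x i + 1)) := by
        ext t
        simp only [Set.mem_inter_iff, Set.mem_preimage, Set.mem_Icc]
        constructor
        · rintro ⟨h, h0, h1⟩; exact ⟨h, by linarith, by linarith⟩
        · rintro ⟨h, h0, h1⟩; exact ⟨h, by linarith, by linarith⟩
      rw [this, measure_preimage_add_right volume (∑ i, x i) _]
    have h3 : ∫⁻ s in E, ({q : (Fin m → ℝ) × ℝ | q.2 - 1 ≤ ∑ i, q.1 i ∧ ∑ i, q.1 i ≤ q.2}.indicator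
          (fun _ => (1:ℝ≥0∞)) (x, s)) =
        volume (E ∩ Set.Icc (∑ i, x i) (∑ i, x i + 1)) := by
      have hind : ∀ s : ℝ, ({q : (Fin m → ℝ) × ℝ | q.2 - 1 ≤ ∑ i, q.1 i ∧ ∑ i, q.1 i ≤ q.2}.indicator
          (fun _ => (1:ℝ≥0∞)) (x, s)) =
          (Set.Icc (∑ i, x i) (∑ i, x i + 1)).indicator (fun _ => (1:ℝ≥0∞)) s := by
        intro s
        by_cases h : s ∈ Set.Icc (∑ i, x i) (∑ i, x i + 1)
        · rw [Set.indicator_of_mem h]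
          rw [Set.indicator_of_mem]
          simp only [Set.mem_Icc] at h
          exact ⟨by linarith [h.2], by linarith [h.1]⟩
        · rw [Set.indicator_of_notMem h, Set.indicator_of_notMem]
          simp only [Set.mem_Icc, not_and_or, not_le] at h
          simp only [Set.mem_setOf_eq, not_and_or, not_le]
          rcases h with h | h
          · right; linarith
          · left; linarith
      simp_rw [hind]
      rw [lintegral_indicator measurableSet_Icc _, setLIntegral_one, Measure.restrict_apply
        measurableSet_Icc, Set.inter_comm]
    rw [h1, h2, ← h3]
  simp_rw [slice]
  rw [lintegral_lintegral_swap]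
  · congr 1
    funext s
    have : ∀ x : Fin m → ℝ, ({q : (Fin m → ℝ) × ℝ | q.2 - 1 ≤ ∑ i, q.1 i ∧ ∑ i, q.1 i ≤ q.2}.indicator
        (fun _ => (1:ℝ≥0∞)) (x, s)) =
        ({x : Fin m → ℝ | s - 1 ≤ ∑ i, x i ∧ ∑ i, x i ≤ s}.indicator (fun _ => (1:ℝ≥0∞)) x) := by
      intro x
      rfl
    simp_rw [this]
    have hMS : MeasurableSet {x : Fin m → ℝ | s - 1 ≤ ∑ i, x i ∧ ∑ i, x i ≤ s} :=
      (measurableSet_le measurable_const hsum_m).inter (measurableSet_le hsum_m measurable_const)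
    rw [lintegral_indicator hMS _, setLIntegral_one]
    rfl
  · exact ((measurable_indicator_const_iff 1).mpr hS).aemeasurable

/-! ### partial sums and the shear map -/

noncomputable def xx (x : Fin m → ℝ) (k : ℕ) : ℝ := if h : k < m then x ⟨k, h⟩ else 0
noncomputable def ps (x : Fin m → ℝ) (n : ℕ) : ℝ := ∑ k ∈ Finset.range n, xx x k

lemma xx_coe (x : Fin m → ℝ) (j : Fin m) : xx x (j : ℕ) = x j := by
  simp [xx, j.isLt]

lemma ps_succ (x : Fin m → ℝ) (k : ℕ) : ps x (k + 1) = ps x k + xx x k :=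
  Finset.sum_range_succ _ _

lemma ps_zero (x : Fin m → ℝ) : ps x 0 = 0 := rfl

lemma ps_m (x : Fin m → ℝ) : ps x m = ∑ i, x i := by
  rw [ps, ← Fin.sum_univ_eq_sum_range (xx x) m]
  exact Finset.sum_congr rfl fun j _ => xx_coe x j

lemma xx_nonneg {x : Fin m → ℝ} (hx : ∀ i, 0 ≤ x i) (k : ℕ) : 0 ≤ xx x k := by
  unfold xx; split_ifs with h
  · exact hx _
  · exact le_refl 0

lemma ps_nonneg {x : Fin m → ℝ} (hx : ∀ i, 0 ≤ x i) (n : ℕ) : 0 ≤ ps x n :=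
  Finset.sum_nonneg fun k _ => xx_nonneg hx k

lemma ps_mono {x : Fin m → ℝ} (hx : ∀ i, 0 ≤ x i) : Monotone (ps x) := by
  intro a b hab
  exact Finset.sum_le_sum_of_subset_of_nonneg (Finset.range_subset_range.2 hab)
    fun k _ _ => xx_nonneg hx k

noncomputable def Lmat (m : ℕ) : Matrix (Fin m) (Fin m) ℝ :=
  fun i j => if (j : ℕ) ≤ (i : ℕ) then 1 else 0

noncomputable def Lmap (m : ℕ) : (Fin m → ℝ) →ₗ[ℝ] (Fin m → ℝ) := Matrix.toLin' (Lmat m)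

lemma det_Lmap : LinearMap.det (Lmap m) = 1 := by
  rw [Lmap, LinearMap.det_toLin']
  have htri : (Lmat m).BlockTriangular OrderDual.toDual := by
    intro i j h
    have : (i : ℕ) < (j : ℕ) := h
    simp only [Lmat, if_neg (by omega : ¬ (j : ℕ) ≤ (i : ℕ))]
  rw [Matrix.det_of_lowerTriangular (Lmat m) htri]
  simp [Lmat]

lemma Lmap_apply (x : Fin m → ℝ) (i : Fin m) : Lmap m x i = ps x ((i : ℕ) + 1) := by
  rw [Lmap, Matrix.toLin'_apply]
  have h1 : (Lmat m).mulVec x i = ∑ j : Fin m, (if (j : ℕ) ≤ (i : ℕ) then xx x (j : ℕ) else 0) := by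
    rw [Matrix.mulVec, dotProduct]
    refine Finset.sum_congr rfl fun j _ => ?_
    by_cases h : (j : ℕ) ≤ (i : ℕ) <;> simp [Lmat, h, xx_coe]
  rw [h1, Fin.sum_univ_eq_sum_range (fun k => if k ≤ (i : ℕ) then xx x k else 0) m]
  rw [ps]
  rw [← Finset.sum_subset (Finset.range_subset_range.2 (by omega : (i : ℕ) + 1 ≤ m))
    (fun k _ hk => if_neg (by simp only [Finset.mem_range] at hk; omega))]
  refine Finset.sum_congr rfl fun k hk => ?_
  rw [if_pos (by simp only [Finset.mem_range] at hk; omega)]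

/-! ### the chambers -/

noncomputable def Kset (m : ℕ) (c : ℝ) (σ : Equiv.Perm (Fin m)) : Set (Fin m → ℝ) :=
  {u | StrictMono (u ∘ σ) ∧ (∀ i, u i ∈ Set.Icc (0:ℝ) 1) ∧ ∀ j : Fin (m+1), gap (u ∘ σ) j ≤ c}

lemma measurable_gap_comp (σ : Equiv.Perm (Fin m)) (j : Fin (m+1)) :
    Measurable fun u : Fin m → ℝ => gap (u ∘ σ) j := by
  unfold gap
  by_cases h : (j : ℕ) < m <;> by_cases h2 : 0 < (j : ℕ) <;>
    simp only [h, h2, dif_pos, dif_neg, not_false_iff, Function.comp_apply] <;>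
    fun_prop

lemma measurableSet_Kset (c : ℝ) (σ : Equiv.Perm (Fin m)) : MeasurableSet (Kset m c σ) := by
  have h1 : MeasurableSet {u : Fin m → ℝ | StrictMono (u ∘ σ)} := by
    have : {u : Fin m → ℝ | StrictMono (u ∘ σ)} =
        ⋂ (p : Fin m × Fin m), ⋂ (_ : p.1 < p.2), {u : Fin m → ℝ | u (σ p.1) < u (σ p.2)} := by
      ext u
      simp only [Set.mem_setOf_eq, Set.mem_iInter, StrictMono, Function.comp_apply]
      exact ⟨fun h p hp => h hp, fun h a b hab => h (a, b) hab⟩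
    rw [this]
    exact MeasurableSet.iInter fun p => MeasurableSet.iInter fun _ =>
      measurableSet_lt (measurable_pi_apply _) (measurable_pi_apply _)
  have h2 : MeasurableSet {u : Fin m → ℝ | ∀ i, u i ∈ Set.Icc (0:ℝ) 1} := by
    have : {u : Fin m → ℝ | ∀ i, u i ∈ Set.Icc (0:ℝ) 1} =
        ⋂ i, (fun u : Fin m → ℝ => u i) ⁻¹' Set.Icc (0:ℝ) 1 := by
      ext u; simp
    rw [this]
    exact MeasurableSet.iInter fun i => (measurable_pi_apply i) measurableSet_Icc
  have h3 : MeasurableSet {u : Fin m → ℝ | ∀ j : Fin (m+1), gap (u ∘ σ) j ≤ c} := by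
    have : {u : Fin m → ℝ | ∀ j : Fin (m+1), gap (u ∘ σ) j ≤ c} =
        ⋂ j, {u : Fin m → ℝ | gap (u ∘ σ) j ≤ c} := by ext u; simp
    rw [this]
    exact MeasurableSet.iInter fun j =>
      measurableSet_le (measurable_gap_comp σ j) measurable_const
  exact h1.inter (h2.inter h3)

lemma Kset_subset (c : ℝ) (σ : Equiv.Perm (Fin m)) :
    Kset m c σ ⊆ {u | maxSpacing u ≤ c} ∩ cube m := by
  rintro u ⟨hmono, hcube, hgap⟩
  constructor
  · have hsorted : sortedPts u = u ∘ σ := by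
      rw [← sortedPts_comp_perm u σ]
      exact sortedPts_of_monotone hmono.monotone
    exact Finset.sup'_le ⟨0, Finset.mem_univ 0⟩ (spacing u)
      fun j _ => by rw [spacing_eq_gap, hsorted]; exact hgap j
  · intro i _
    exact hcube i

lemma mem_Kset_sort {c : ℝ} {u : Fin m → ℝ} (hinj : Function.Injective u)
    (hu : u ∈ {u : Fin m → ℝ | maxSpacing u ≤ c} ∩ cube m) : u ∈ Kset m c (Tuple.sort u) := by
  obtain ⟨hmax, hcube⟩ := hu
  have hmono : Monotone (u ∘ Tuple.sort u) := Tuple.monotone_sort u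
  refine ⟨hmono.strictMono_of_injective (hinj.comp (Tuple.sort u).injective),
    fun i => hcube i (Set.mem_univ i), ?_⟩
  intro j
  have : gap (u ∘ Tuple.sort u) j = spacing u j := rfl
  rw [this]
  exact (le_maxSpacing u j).trans hmax

lemma Kset_disjoint (c : ℝ) :
    Pairwise (Function.onFun Disjoint fun σ : Equiv.Perm (Fin m) => Kset m c σ) := by
  intro σ τ hστ
  rw [Function.onFun, Set.disjoint_left]
  rintro u ⟨hσ, -, -⟩ ⟨hτ, -, -⟩
  apply hστ
  have h1 : u ∘ σ = u ∘ τ :=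
    Tuple.unique_monotone hσ.monotone hτ.monotone
  have hinj : Function.Injective u := by
    intro a b hab
    have h0 : (u ∘ σ) (σ.symm a) = (u ∘ σ) (σ.symm b) := by
      simp only [Function.comp_apply, Equiv.apply_symm_apply, hab]
    have h2 := hσ.injective h0
    have h3 := congrArg σ h2
    simpa using h3
  exact Equiv.ext fun i => hinj (congrFun h1 i)

lemma volume_Kset_eq (c : ℝ) (σ : Equiv.Perm (Fin m)) :
    volume (Kset m c σ) = volume (Kset m c 1) := by
  have hmp : MeasurePreserving
      (MeasurableEquiv.piCongrLeft (fun _ : Fin m => ℝ) (σ⁻¹ : Fin m ≃ Fin m))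
      volume volume :=
    volume_measurePreserving_piCongrLeft (fun _ : Fin m => ℝ) _
  have hcoe : ⇑(MeasurableEquiv.piCongrLeft (fun _ : Fin m => ℝ)
      (σ⁻¹ : Fin m ≃ Fin m)) = fun u : Fin m → ℝ => u ∘ σ := by
    funext u i
    conv_lhs => rw [show i = (σ⁻¹ : Fin m ≃ Fin m) (σ i) by simp]
    rw [MeasurableEquiv.piCongrLeft_apply_apply]
    rfl
  have hset : Kset m c σ = (fun u : Fin m → ℝ => u ∘ σ) ⁻¹' Kset m c 1 := by
    ext u
    simp only [Kset, Set.mem_preimage, Set.mem_setOf_eq, Equiv.Perm.coe_one, Function.comp_id,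
      CompTriple.comp_eq]
    constructor
    · rintro ⟨h1, h2, h3⟩
      exact ⟨h1, fun i => h2 (σ i), h3⟩
    · rintro ⟨h1, h2, h3⟩
      refine ⟨h1, fun i => ?_, h3⟩
      have := h2 (σ.symm i)
      simpa using this
  rw [hset, ← hcoe]
  exact hmp.measure_preimage (measurableSet_Kset c 1).nullMeasurableSet

lemma volume_not_injective :
    volume {u : Fin m → ℝ | ¬ Function.Injective u} = 0 := by
  have hsub : {u : Fin m → ℝ | ¬ Function.Injective u} ⊆
      ⋃ p : Fin m × Fin m, ⋃ (_ : p.1 ≠ p.2), {u : Fin m → ℝ | u p.1 = u p.2} := by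
    intro u hu
    simp only [Set.mem_setOf_eq, Function.Injective, not_forall] at hu
    obtain ⟨a, b, hab, hne⟩ := hu
    exact Set.mem_iUnion.2 ⟨(a, b), Set.mem_iUnion.2 ⟨hne, hab⟩⟩
  refine measure_mono_null hsub (measure_iUnion_null fun p => measure_iUnion_null fun hne => ?_)
  have : {u : Fin m → ℝ | u p.1 = u p.2} =
      (LinearMap.ker ((LinearMap.proj p.1 : (Fin m → ℝ) →ₗ[ℝ] ℝ) - LinearMap.proj p.2) : Set (Fin m → ℝ)) := by
    ext u
    simp only [Set.mem_setOf_eq, SetLike.mem_coe, LinearMap.mem_ker, LinearMap.sub_apply,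
      LinearMap.proj_apply]
    constructor
    · intro h; rw [h]; ring
    · intro h; linarith [h]
  rw [this]
  refine Measure.addHaar_submodule volume _ fun htop => ?_
  have h1 : (Pi.single p.1 1 : Fin m → ℝ) ∈
      LinearMap.ker ((LinearMap.proj p.1 : (Fin m → ℝ) →ₗ[ℝ] ℝ) - LinearMap.proj p.2) := by
    rw [htop]; trivial
  simp only [LinearMap.mem_ker, LinearMap.sub_apply, LinearMap.proj_apply] at h1
  rw [Pi.single_eq_same, Pi.single_eq_of_ne (Ne.symm hne)] at h1
  norm_num at h1

lemma measure_A_eq (c : ℝ) :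
    volume ({u : Fin m → ℝ | maxSpacing u ≤ c} ∩ cube m) =
      (Nat.factorial m : ℝ≥0∞) * volume (Kset m c 1) := by
  have hUnion : volume (⋃ σ : Equiv.Perm (Fin m), Kset m c σ) =
      ∑' σ : Equiv.Perm (Fin m), volume (Kset m c σ) :=
    measure_iUnion (Kset_disjoint c) fun σ => measurableSet_Kset c σ
  have hsub1 : (⋃ σ : Equiv.Perm (Fin m), Kset m c σ) ⊆
      {u : Fin m → ℝ | maxSpacing u ≤ c} ∩ cube m :=
    Set.iUnion_subset fun σ => Kset_subset c σ
  have hsub2 : ({u : Fin m → ℝ | maxSpacing u ≤ c} ∩ cube m) \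
      (⋃ σ : Equiv.Perm (Fin m), Kset m c σ) ⊆ {u : Fin m → ℝ | ¬ Function.Injective u} := by
    rintro u ⟨hu, hnot⟩
    by_contra hinj
    simp only [Set.mem_setOf_eq, not_not] at hinj
    exact hnot (Set.mem_iUnion.2 ⟨Tuple.sort u, mem_Kset_sort hinj hu⟩)
  have heq : volume ({u : Fin m → ℝ | maxSpacing u ≤ c} ∩ cube m) =
      volume (⋃ σ : Equiv.Perm (Fin m), Kset m c σ) := by
    refine le_antisymm ?_ (measure_mono hsub1)
    calc volume ({u : Fin m → ℝ | maxSpacing u ≤ c} ∩ cube m)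
        ≤ volume ((⋃ σ : Equiv.Perm (Fin m), Kset m c σ) ∪
            (({u : Fin m → ℝ | maxSpacing u ≤ c} ∩ cube m) \
              (⋃ σ : Equiv.Perm (Fin m), Kset m c σ))) :=
          measure_mono fun u hu => by
            by_cases h : u ∈ ⋃ σ : Equiv.Perm (Fin m), Kset m c σ
            · exact Or.inl h
            · exact Or.inr ⟨hu, h⟩
      _ ≤ volume (⋃ σ : Equiv.Perm (Fin m), Kset m c σ) +
            volume (({u : Fin m → ℝ | maxSpacing u ≤ c} ∩ cube m) \
              (⋃ σ : Equiv.Perm (Fin m), Kset m c σ)) := measure_union_le _ _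
      _ = volume (⋃ σ : Equiv.Perm (Fin m), Kset m c σ) := by
          rw [measure_mono_null hsub2 volume_not_injective, add_zero]
  rw [heq, hUnion, tsum_fintype]
  have : ∀ σ : Equiv.Perm (Fin m), volume (Kset m c σ) = volume (Kset m c 1) :=
    volume_Kset_eq c
  simp_rw [this]
  rw [Finset.sum_const, Finset.card_univ, Fintype.card_perm, Fintype.card_fin, nsmul_eq_mul]

/-! ### the key pointwise identification -/

lemma mem_Kone_iff {s : ℝ} (hs : 0 < s) (x : Fin m → ℝ)
    (hx : ∀ i : Fin m, (i : ℕ) ≠ 0 → x i ≠ 0) :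
    ((s⁻¹ • Lmap m) x ∈ Kset m (1/s) 1) ↔
      ((s - 1 ≤ ∑ i, x i ∧ ∑ i, x i ≤ s) ∧ ∀ i, x i ∈ Set.Icc (0:ℝ) 1) := by
  have hsne : s ≠ 0 := hs.ne'
  have hsinv : 0 < s⁻¹ := inv_pos.2 hs
  set u : Fin m → ℝ := (s⁻¹ • Lmap m) x with hu
  have hui : ∀ (k : ℕ) (hk : k < m), u ⟨k, hk⟩ = s⁻¹ * ps x (k+1) := by
    intro k hk
    rw [hu, LinearMap.smul_apply, Pi.smul_apply, smul_eq_mul, Lmap_apply]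
  have hui' : ∀ i : Fin m, u i = s⁻¹ * ps x ((i:ℕ)+1) := fun i => hui (i:ℕ) i.isLt
  have hgap_lt : ∀ (j : Fin (m+1)) (h : (j:ℕ) < m), gap u j = s⁻¹ * x ⟨(j:ℕ), h⟩ := by
    intro j h
    have hxxj : xx x (j:ℕ) = x ⟨(j:ℕ), h⟩ := dif_pos h
    unfold gap
    rw [dif_pos h]
    by_cases h2 : 0 < (j:ℕ)
    · rw [dif_pos h2]
      show u ⟨(j:ℕ), h⟩ - u ⟨(j:ℕ)-1, by omega⟩ = _
      rw [hui (j:ℕ) h, hui ((j:ℕ)-1) (by omega),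
        show (j:ℕ)-1+1 = (j:ℕ) from by omega, ps_succ x (j:ℕ), hxxj]
      ring
    · rw [dif_neg h2]
      have hj0 : (j:ℕ) = 0 := by omega
      show u ⟨(j:ℕ), h⟩ - 0 = _
      rw [hui (j:ℕ) h]
      have hps : ps x ((j:ℕ) + 1) = x ⟨(j:ℕ), h⟩ := by
        rw [ps_succ, hxxj, show ps x (j:ℕ) = 0 from by rw [hj0]; rfl, zero_add]
      rw [hps]
      ring
  have hgap_last : ∀ (j : Fin (m+1)), ¬ (j:ℕ) < m → gap u j = 1 - s⁻¹ * ∑ i, x i := by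
    intro j h
    have hjm : (j:ℕ) = m := by have := j.isLt; omega
    unfold gap
    rw [dif_neg h]
    by_cases hm : 0 < (j:ℕ)
    · rw [dif_pos hm]
      show (1:ℝ) - u ⟨(j:ℕ)-1, by omega⟩ = _
      rw [hui ((j:ℕ)-1) (by omega), show (j:ℕ)-1+1 = (j:ℕ) from by omega, hjm, ps_m]
    · rw [dif_neg hm]
      have hm0 : m = 0 := by omega
      have hsum0 : ∑ i, x i = 0 := by subst hm0; simp
      rw [hsum0]
      ring
  have hcoe1 : (u ∘ ⇑(1 : Equiv.Perm (Fin m))) = u := by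
    funext i; simp
  constructor
  · rintro ⟨hmono, hcube, hgap⟩
    rw [hcoe1] at hmono hgap
    have hxle1 : ∀ i : Fin m, x i ≤ 1 := by
      intro i
      have h := hgap ⟨(i:ℕ), by omega⟩
      rw [hgap_lt ⟨(i:ℕ), by omega⟩ (by simpa using i.isLt)] at h
      have h' : s⁻¹ * x i ≤ s⁻¹ * 1 := by
        rw [mul_one, ← one_div s]
        simpa using h
      exact le_of_mul_le_mul_left h' hsinv
    have hxpos : ∀ i : Fin m, (i:ℕ) ≠ 0 → 0 < x i := by
      intro i hi
      have hlt : (⟨(i:ℕ)-1, by omega⟩ : Fin m) < i := by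
        rw [Fin.lt_def]
        show (i:ℕ)-1 < (i:ℕ)
        omega
      have h := hmono hlt
      rw [hui ((i:ℕ)-1) (by omega), hui' i,
        show (i:ℕ)-1+1 = (i:ℕ) from by omega] at h
      have h2 := lt_of_mul_lt_mul_left h hsinv.le
      rw [ps_succ x (i:ℕ), xx_coe] at h2
      linarith
    have hx0 : ∀ i : Fin m, 0 ≤ x i := by
      intro i
      by_cases hi : (i:ℕ) = 0
      · have h := (hcube i).1
        rw [hui' i, hi] at h
        rw [ps_succ x 0, ps_zero, zero_add] at h
        have hxx : xx x 0 = x i := by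
          rw [show (0:ℕ) = (i:ℕ) from hi.symm, xx_coe]
        rw [hxx] at h
        nlinarith
      · exact (hxpos i hi).le
    have hsumle : ∑ i, x i ≤ s := by
      by_cases hm : 0 < m
      · have h := (hcube ⟨m-1, by omega⟩).2
        rw [hui (m-1) (by omega), show m-1+1 = m from by omega, ps_m] at h
        have h2 : s⁻¹ * (∑ i, x i) ≤ s⁻¹ * s := by
          rw [inv_mul_cancel₀ hsne]; exact h
        exact le_of_mul_le_mul_left h2 hsinv
      · have hm0 : m = 0 := by omega
        have : ∑ i, x i = 0 := by subst hm0; simp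
        rw [this]; exact hs.le
    have hsumge : s - 1 ≤ ∑ i, x i := by
      have h := hgap (Fin.last m)
      rw [hgap_last (Fin.last m) (by simp)] at h
      rw [one_div] at h
      have h2 : s * (1 - s⁻¹ * ∑ i, x i) ≤ s * s⁻¹ := mul_le_mul_of_nonneg_left h hs.le
      rw [mul_sub, mul_one, ← mul_assoc, mul_inv_cancel₀ hsne, one_mul] at h2
      linarith
    exact ⟨⟨hsumge, hsumle⟩, fun i => ⟨hx0 i, hxle1 i⟩⟩
  · rintro ⟨⟨hsumge, hsumle⟩, hcube⟩
    have hx0 : ∀ i : Fin m, 0 ≤ x i := fun i => (hcube i).1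
    have hx1 : ∀ i : Fin m, x i ≤ 1 := fun i => (hcube i).2
    have hxpos : ∀ i : Fin m, (i:ℕ) ≠ 0 → 0 < x i :=
      fun i hi => lt_of_le_of_ne (hx0 i) (Ne.symm (hx i hi))
    have hmono : StrictMono u := by
      intro a b hab
      rw [hui' a, hui' b]
      refine mul_lt_mul_of_pos_left ?_ hsinv
      have hab' : (a:ℕ) < (b:ℕ) := hab
      calc ps x ((a:ℕ)+1) ≤ ps x (b:ℕ) := ps_mono hx0 (by omega)
        _ < ps x ((b:ℕ)+1) := by
            rw [ps_succ x (b:ℕ), xx_coe]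
            have : 0 < x b := hxpos b (by omega)
            linarith
    refine ⟨by rw [hcoe1]; exact hmono, ?_, ?_⟩
    · intro i
      rw [hui' i]
      constructor
      · exact mul_nonneg hsinv.le (ps_nonneg hx0 _)
      · have h1 : ps x ((i:ℕ)+1) ≤ ps x m := ps_mono hx0 (by omega)
        rw [ps_m] at h1
        have h2 : s⁻¹ * ps x ((i:ℕ)+1) ≤ s⁻¹ * s :=
          mul_le_mul_of_nonneg_left (h1.trans hsumle) hsinv.le
        rw [inv_mul_cancel₀ hsne] at h2
        exact h2
    · intro j
      rw [hcoe1]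
      by_cases h : (j:ℕ) < m
      · rw [hgap_lt j h, one_div]
        calc s⁻¹ * x ⟨(j:ℕ), h⟩ ≤ s⁻¹ * 1 :=
              mul_le_mul_of_nonneg_left (hx1 _) hsinv.le
          _ = s⁻¹ := mul_one _
      · rw [hgap_last j h, one_div]
        have h2 : s⁻¹ * (s - 1) ≤ s⁻¹ * ∑ i, x i := mul_le_mul_of_nonneg_left hsumge hsinv.le
        rw [mul_sub, mul_one, inv_mul_cancel₀ hsne] at h2
        linarith

lemma volume_coordzero_null :
    volume {x : Fin m → ℝ | ∃ i : Fin m, (i:ℕ) ≠ 0 ∧ x i = 0} = 0 := by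
  have hsub : {x : Fin m → ℝ | ∃ i : Fin m, (i:ℕ) ≠ 0 ∧ x i = 0} ⊆
      ⋃ i : Fin m, ⋃ (_ : (i:ℕ) ≠ 0), {x : Fin m → ℝ | x i = 0} := by
    rintro x ⟨i, hi, hxi⟩
    exact Set.mem_iUnion.2 ⟨i, Set.mem_iUnion.2 ⟨hi, hxi⟩⟩
  refine measure_mono_null hsub (measure_iUnion_null fun i => measure_iUnion_null fun hi => ?_)
  have : {x : Fin m → ℝ | x i = 0} =
      (LinearMap.ker (LinearMap.proj i : (Fin m → ℝ) →ₗ[ℝ] ℝ) : Set (Fin m → ℝ)) := by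
    ext x
    simp [LinearMap.mem_ker]
  rw [this]
  refine Measure.addHaar_submodule volume _ fun htop => ?_
  have h1 : (fun _ => (1:ℝ)) ∈ LinearMap.ker (LinearMap.proj i : (Fin m → ℝ) →ₗ[ℝ] ℝ) := by
    rw [htop]; trivial
  simp only [LinearMap.mem_ker, LinearMap.proj_apply] at h1
  norm_num at h1

/-! ### the density identity -/

lemma dens_eq (s : ℝ) (hs : s ≠ 0) :
    dens m s = ENNReal.ofReal (s ^ m / (Nat.factorial m)) *
      (Measure.pi fun _ : Fin m => volume.restrict (Set.Icc (0 : ℝ) 1))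
        {u | maxSpacing u ≤ 1 / s} := by
  rcases lt_or_gt_of_ne hs with hneg | hpos
  · have h1 : dens m s = 0 := by
      rw [dens, pi_restrict_eq, Measure.restrict_apply' measurableSet_cube]
      have : {x : Fin m → ℝ | s - 1 ≤ ∑ i, x i ∧ ∑ i, x i ≤ s} ∩ cube m = ∅ := by
        ext x
        simp only [Set.mem_inter_iff, Set.mem_setOf_eq, Set.mem_empty_iff_false, iff_false,
          not_and]
        intro hsum hc
        have h0 : 0 ≤ ∑ i, x i :=
          Finset.sum_nonneg fun i _ => (hc i (Set.mem_univ i)).1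
        linarith [hsum.2]
      rw [this, measure_empty]
    have h2 : {u : Fin m → ℝ | maxSpacing u ≤ 1/s} = ∅ := by
      ext u
      simp only [Set.mem_setOf_eq, Set.mem_empty_iff_false, iff_false, not_le]
      calc 1/s < 0 := one_div_neg.mpr hneg
        _ < maxSpacing u := maxSpacing_pos u
    rw [h1, h2]
    simp
  · -- s > 0
    have hsne : s ≠ 0 := hpos.ne'
    set T : (Fin m → ℝ) →ₗ[ℝ] (Fin m → ℝ) := s⁻¹ • Lmap m with hT
    have hdetT : LinearMap.det T = (s⁻¹) ^ m := by
      rw [hT, LinearMap.det_smul, det_Lmap, mul_one, Module.finrank_fintype_fun_eq_card,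
        Fintype.card_fin]
    have hdet_ne : LinearMap.det T ≠ 0 := by
      rw [hdetT]
      positivity
    have hpre : volume (T ⁻¹' Kset m (1/s) 1) =
        ENNReal.ofReal (s ^ m) * volume (Kset m (1/s) 1) := by
      rw [Measure.addHaar_preimage_linearMap volume hdet_ne]
      congr 1
      rw [hdetT, ← inv_pow, inv_inv, abs_of_pos (pow_pos hpos m)]
    have hsets : (T ⁻¹' Kset m (1/s) 1) \ {x : Fin m → ℝ | ∃ i : Fin m, (i:ℕ) ≠ 0 ∧ x i = 0} =
        ({x : Fin m → ℝ | s - 1 ≤ ∑ i, x i ∧ ∑ i, x i ≤ s} ∩ cube m) \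
          {x : Fin m → ℝ | ∃ i : Fin m, (i:ℕ) ≠ 0 ∧ x i = 0} := by
      ext x
      simp only [Set.mem_diff, Set.mem_preimage, Set.mem_setOf_eq, Set.mem_inter_iff, not_exists,
        not_and]
      constructor
      · rintro ⟨hK, hN⟩
        have hx : ∀ i : Fin m, (i:ℕ) ≠ 0 → x i ≠ 0 := fun i hi => hN i hi
        have := (mem_Kone_iff hpos x hx).mp hK
        exact ⟨⟨this.1, fun i _ => this.2 i⟩, fun i hi => hN i hi⟩
      · rintro ⟨⟨hsum, hc⟩, hN⟩
        have hx : ∀ i : Fin m, (i:ℕ) ≠ 0 → x i ≠ 0 := fun i hi => hN i hi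
        exact ⟨(mem_Kone_iff hpos x hx).mpr ⟨hsum, fun i => hc i (Set.mem_univ i)⟩,
          fun i hi => hN i hi⟩
    have hvol : volume (T ⁻¹' Kset m (1/s) 1) =
        volume ({x : Fin m → ℝ | s - 1 ≤ ∑ i, x i ∧ ∑ i, x i ≤ s} ∩ cube m) := by
      rw [← measure_diff_null volume_coordzero_null, hsets,
        measure_diff_null volume_coordzero_null]
    rw [dens, pi_restrict_eq, Measure.restrict_apply' measurableSet_cube,
      Measure.restrict_apply' measurableSet_cube, measure_A_eq (1/s), ← hvol, hpre, ← mul_assoc]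
    congr 1
    rw [show ((Nat.factorial m : ℝ≥0∞)) = ENNReal.ofReal (Nat.factorial m : ℝ) from
      (ENNReal.ofReal_natCast _).symm, ← ENNReal.ofReal_mul (by positivity),
      div_mul_cancel₀]
    exact Nat.cast_ne_zero.mpr (Nat.factorial_ne_zero m)

end IrwinHallAux

/-- The density of the sum of `ℓ = m+1` i.i.d. uniform `[0,1]` random variables equals
`(s^{ℓ-1}/(ℓ-1)!) · P(max_{j∈[ℓ]} L_j ≤ 1/s)` where `L₁,…,L_ℓ` are the spacings of
`ℓ-1` i.i.d. uniform points in `[0,1]`. -/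
theorem pdf_sum_uniform_eq (m : ℕ) :
    let P : Measure (Fin (m + 1) → ℝ) :=
      Measure.pi fun _ => volume.restrict (Set.Icc (0 : ℝ) 1)
    let Ppts : Measure (Fin m → ℝ) :=
      Measure.pi fun _ => volume.restrict (Set.Icc (0 : ℝ) 1)
    ∀ᵐ s ∂(volume : Measure ℝ),
      pdf (fun x : Fin (m + 1) → ℝ => ∑ i, x i) P volume s =
        ENNReal.ofReal (s ^ m / (Nat.factorial m)) *
          Ppts {u | maxSpacing u ≤ 1 / s} := by
  intro P Ppts
  have h1 : pdf (fun x : Fin (m + 1) → ℝ => ∑ i, x i) P volume =ᵐ[volume] IrwinHallAux.dens m := by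
    rw [pdf_def, IrwinHallAux.map_sum_eq]
    exact Measure.rnDeriv_withDensity volume IrwinHallAux.measurable_dens
  have h2 : ∀ᵐ s ∂(volume : Measure ℝ), s ≠ 0 := by
    have : (volume : Measure ℝ) {(0 : ℝ)} = 0 := measure_singleton 0
    filter_upwards [measure_eq_zero_iff_ae_notMem.mp this] with s hs
    simpa using hs
  filter_upwards [h1, h2] with s h1 h2
  rw [h1, IrwinHallAux.dens_eq s h2]
end

section
/- Let L_ℓ⁺ be the maximal spacing of ℓ-1 i.i.d. uniform points in [0,1]. For every ρ > 0 and every d ∈ (0, e^ρ - 1), P(L_ℓ⁺ ≤ ℓ^{-1}(log(ℓ/log ℓ) - ρ)) = O(ℓ^{-d}) as ℓ → ∞. -/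
open MeasureTheory Filter
open Nat

noncomputable def Ppts (m : ℕ) : Measure (Fin m → ℝ) :=
  Measure.pi fun _ => volume.restrict (Set.Icc (0 : ℝ) 1)


-- aux: factorial bound
lemma fact_le (m : ℕ) (hm : 1 ≤ m) : (m ! : ℝ) ≤ (m:ℝ)^(m+1) * Real.exp (1 - m) := by
  induction m with
  | zero => omega
  | succ n ih =>
    rcases Nat.eq_or_lt_of_le hm with h | h
    · obtain rfl : n = 0 := by omega
      norm_num [Nat.factorial]
    · have hn : 1 ≤ n := by omega
      have ihn := ih hn
      have hnR : (1:ℝ) ≤ n := by exact_mod_cast hn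
      have key : (n:ℝ)^(n+1) ≤ ((n:ℝ)+1)^(n+1) * Real.exp (-1) := by
        -- equivalent to e ≤ ((n+1)/n)^(n+1), i.e. 1/(n+1) ≤ log((n+1)/n)
        have hlog : Real.log ((n:ℝ)/((n:ℝ)+1)) ≤ (n:ℝ)/((n:ℝ)+1) - 1 :=
          Real.log_le_sub_one_of_pos (by positivity)
        have h1 : (1:ℝ)/((n:ℝ)+1) ≤ Real.log (((n:ℝ)+1)/(n:ℝ)) := by
          rw [Real.log_div (by positivity) (by positivity)]
          rw [Real.log_div (by positivity) (by positivity)] at hlog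
          have : (n:ℝ)/((n:ℝ)+1) - 1 = -(1/((n:ℝ)+1)) := by field_simp; ring
          linarith [hlog, this ▸ hlog]
        have h2 : Real.exp 1 ≤ (((n:ℝ)+1)/(n:ℝ))^(n+1) := by
          have := Real.exp_le_exp.mpr (mul_le_mul_of_nonneg_left h1 (by positivity : (0:ℝ) ≤ (n:ℝ)+1))
          calc Real.exp 1 = Real.exp (((n:ℝ)+1) * (1/((n:ℝ)+1))) := by
                congr 1; field_simp
            _ ≤ Real.exp (((n:ℝ)+1) * Real.log (((n:ℝ)+1)/(n:ℝ))) := this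
            _ = (((n:ℝ)+1)/(n:ℝ))^((n:ℝ)+1) := by
                rw [Real.rpow_def_of_pos (by positivity)]; ring_nf
            _ = (((n:ℝ)+1)/(n:ℝ))^(n+1) := by
                rw [show ((n:ℝ)+1) = ((n+1 : ℕ):ℝ) by push_cast; ring, Real.rpow_natCast]
        have hpow : ((n:ℝ)+1)^(n+1) = (((n:ℝ)+1)/(n:ℝ))^(n+1) * (n:ℝ)^(n+1) := by
          rw [div_pow]; field_simp
        calc (n:ℝ)^(n+1) = Real.exp 1 * Real.exp (-1) * (n:ℝ)^(n+1) := by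
              rw [← Real.exp_add]; simp
          _ ≤ (((n:ℝ)+1)/(n:ℝ))^(n+1) * Real.exp (-1) * (n:ℝ)^(n+1) := by
              have : (0:ℝ) ≤ Real.exp (-1) * (n:ℝ)^(n+1) := by positivity
              nlinarith [h2, this]
          _ = ((n:ℝ)+1)^(n+1) * Real.exp (-1) := by rw [hpow]; ring
      calc ((n+1)! : ℝ) = ((n:ℝ)+1) * (n ! : ℝ) := by
            rw [Nat.factorial_succ]; push_cast; ring
        _ ≤ ((n:ℝ)+1) * ((n:ℝ)^(n+1) * Real.exp (1 - n)) := by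
            have : (0:ℝ) ≤ (n:ℝ)+1 := by positivity
            nlinarith [ihn]
        _ ≤ ((n:ℝ)+1) * (((n:ℝ)+1)^(n+1) * Real.exp (-1) * Real.exp (1 - n)) := by
            have he : (0:ℝ) < Real.exp (1 - n) := Real.exp_pos _
            have : (0:ℝ) ≤ (n:ℝ)+1 := by positivity
            nlinarith [key, he, mul_le_mul_of_nonneg_right key (le_of_lt he)]
        _ = ((n:ℝ)+1)^(n+1+1) * Real.exp (1 - ((n:ℝ)+1)) := by
            rw [show Real.exp (1 - ((n:ℝ)+1)) = Real.exp (-1) * Real.exp (1-(n:ℝ)) by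
              rw [← Real.exp_add]; ring_nf]
            ring
        _ = (((n+1:ℕ)):ℝ)^(n+1+1) * Real.exp (1 - ((n+1:ℕ):ℝ)) := by push_cast; ring



noncomputable def gapMap (m : ℕ) : (Fin m → ℝ) →ₗ[ℝ] (Fin m → ℝ) where
  toFun v := fun i => v i - (if h : 0 < (i : ℕ) then
    v ⟨(i:ℕ) - 1, Nat.lt_of_le_of_lt (Nat.sub_le _ _) i.isLt⟩ else 0)
  map_add' u v := by
    funext i; by_cases h : 0 < (i:ℕ) <;> simp [h] <;> ring
  map_smul' c v := by
    funext i; by_cases h : 0 < (i:ℕ) <;> simp [h] <;> ring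

lemma gapMap_det (m : ℕ) : LinearMap.det (gapMap m) = 1 := by
  rw [← LinearMap.det_toMatrix']
  rw [Matrix.det_of_lowerTriangular]
  · apply Finset.prod_eq_one
    intro i _
    rw [LinearMap.toMatrix'_apply]
    simp only [gapMap, LinearMap.coe_mk, AddHom.coe_mk]
    by_cases h : 0 < (i:ℕ)
    · rw [dif_pos h]
      have h1 : i = i := rfl
      have hne : (⟨(i:ℕ) - 1, Nat.lt_of_le_of_lt (Nat.sub_le _ _) i.isLt⟩ : Fin m) ≠ i := by
        intro hc
        have := congrArg Fin.val hc
        simp at this; omega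
      simp [hne]
    · rw [dif_neg h]; simp
  · intro i j hij
    have hij' : (i:Fin m) < j := hij
    rw [LinearMap.toMatrix'_apply]
    simp only [gapMap, LinearMap.coe_mk, AddHom.coe_mk]
    have h1 : i ≠ j := ne_of_lt hij'
    have hvlt : (i:ℕ) < (j:ℕ) := hij'
    by_cases h : 0 < (i:ℕ)
    · rw [dif_pos h]
      have hne : (⟨(i:ℕ) - 1, Nat.lt_of_le_of_lt (Nat.sub_le _ _) i.isLt⟩ : Fin m) ≠ j := by
        intro hc
        have := congrArg Fin.val hc
        simp at this; omega
      simp [h1, hne, Function.update]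
    · rw [dif_neg h]
      simp [Function.update]
      simp [Pi.single_apply, h1]

lemma gapMap_sum {m : ℕ} (hm : 0 < m) (v : Fin m → ℝ) :
    ∑ i, gapMap m v i = v ⟨m - 1, by omega⟩ := by
  induction m with
  | zero => omega
  | succ n ih =>
    rcases Nat.eq_zero_or_pos n with hn | hn
    · subst hn
      simp [gapMap]
    · rw [Fin.sum_univ_castSucc]
      have hcast : ∀ i : Fin n, gapMap (n+1) v i.castSucc = gapMap n (v ∘ Fin.castSucc) i := by
        intro i
        simp only [gapMap, LinearMap.coe_mk, AddHom.coe_mk, Function.comp]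
        by_cases h : 0 < (i:ℕ)
        · rw [dif_pos (by simpa using h), dif_pos h]
          congr 1
        · rw [dif_neg (by simpa using h), dif_neg h]
      rw [Finset.sum_congr rfl (fun i _ => hcast i), ih hn]
      have hlast : gapMap (n+1) v (Fin.last n) = v (Fin.last n) - v ⟨n - 1, by omega⟩ := by
        simp only [gapMap, LinearMap.coe_mk, AddHom.coe_mk]
        rw [dif_pos (by simp [Fin.last]; omega)]
        congr 1
      rw [hlast]
      have : (v ∘ Fin.castSucc) ⟨n - 1, by omega⟩ = v ⟨n - 1, by omega⟩ := by
        simp [Function.comp, Fin.castSucc, Fin.castAdd, Fin.castLE]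
      rw [this]
      simp [Fin.last]


lemma pi_restrict (m : ℕ) (s : Set ℝ) (hs : MeasurableSet s) :
    (Measure.pi fun _ : Fin m => (volume : Measure ℝ).restrict s) =
      (volume : Measure (Fin m → ℝ)).restrict (Set.univ.pi fun _ => s) := by
  refine Measure.pi_eq fun t ht => ?_
  rw [Measure.restrict_apply (MeasurableSet.univ_pi ht), ← Set.pi_inter_distrib,
    volume_pi_pi]
  exact Finset.prod_congr rfl fun i _ => (Measure.restrict_apply (ht i)).symm

lemma ppts_eq (m : ℕ) : Ppts m =
    (volume : Measure (Fin m → ℝ)).restrict (Set.univ.pi fun _ => Set.Icc (0:ℝ) 1) :=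
  pi_restrict m _ measurableSet_Icc

lemma measurePreserving_comp_perm (m : ℕ) (σ : Equiv.Perm (Fin m)) :
    MeasurePreserving (fun u : Fin m → ℝ => u ∘ σ) (Ppts m) (Ppts m) := by
  have h := measurePreserving_arrowCongr' (fun _ : Fin m => (volume : Measure ℝ).restrict (Set.Icc (0:ℝ) 1))
    (fun _ : Fin m => (volume : Measure ℝ).restrict (Set.Icc (0:ℝ) 1)) σ.symm
    (MeasurableEquiv.refl ℝ) (fun _ => MeasurePreserving.id _)
  have he : ⇑(MeasurableEquiv.arrowCongr' σ.symm (MeasurableEquiv.refl ℝ)) =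
      fun u : Fin m → ℝ => u ∘ σ := by
    funext u
    simp [MeasurableEquiv.arrowCongr', Equiv.arrowCongr', Equiv.arrowCongr]
    rfl
  rw [he] at h
  exact h


def Gset (m : ℕ) (x : ℝ) : Set (Fin m → ℝ) :=
  {g | (∀ i, g i ∈ Set.Icc 0 x) ∧ ∑ i, g i ≤ 1}

lemma measurable_Gset (m : ℕ) (x : ℝ) : MeasurableSet (Gset m x) := by
  have h1 : MeasurableSet {g : Fin m → ℝ | ∀ i, g i ∈ Set.Icc 0 x} := by
    have : {g : Fin m → ℝ | ∀ i, g i ∈ Set.Icc 0 x} = Set.univ.pi fun _ => Set.Icc 0 x := by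
      ext g; rw [Set.mem_setOf_eq, Set.mem_univ_pi]
    rw [this]
    exact MeasurableSet.univ_pi fun _ => measurableSet_Icc
  have h2 : MeasurableSet {g : Fin m → ℝ | ∑ i, g i ≤ 1} :=
    measurableSet_le (Finset.measurable_sum _ fun i _ => measurable_pi_apply i) measurable_const
  exact h1.inter h2

lemma exp_neg_integral (θ x : ℝ) (hθ : 0 < θ) (hx : 0 ≤ x) :
    ∫ t in Set.Icc (0:ℝ) x, Real.exp (-θ * t) = (1 - Real.exp (-θ * x)) / θ := by
  rw [MeasureTheory.integral_Icc_eq_integral_Ioc, ← intervalIntegral.integral_of_le hx]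
  have hderiv : ∀ t ∈ Set.uIcc (0:ℝ) x,
      HasDerivAt (fun t => -Real.exp (-θ * t) / θ) (Real.exp (-θ * t)) t := by
    intro t _
    have h1 : HasDerivAt (fun t : ℝ => -θ * t) (-θ) t := by
      simpa using (hasDerivAt_id t).const_mul (-θ)
    have h2 : HasDerivAt (fun t : ℝ => Real.exp (-θ * t)) (Real.exp (-θ * t) * (-θ)) t :=
      (Real.hasDerivAt_exp _).comp t h1
    have h3 := (h2.neg).div_const θ
    exact h3.congr_deriv (by rw [mul_neg, neg_neg, mul_div_assoc, div_self hθ.ne', mul_one])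
  rw [intervalIntegral.integral_eq_sub_of_hasDerivAt hderiv
    (Continuous.intervalIntegrable (by continuity) 0 x)]
  field_simp
  ring_nf
  rw [Real.exp_zero]; ring

lemma chernoff (m : ℕ) (x : ℝ) (hx : 0 ≤ x) :
    volume (Gset m x) ≤
      ENNReal.ofReal (Real.exp (m+1) * ((1 - Real.exp (-((m:ℝ)+1) * x)) / ((m:ℝ)+1))^m) := by
  set θ : ℝ := (m:ℝ)+1 with hθdef
  have hθ : 0 < θ := by positivity
  set h : ℝ → ℝ := (Set.Icc (0:ℝ) x).indicator (fun t => Real.exp (-θ * t)) with hh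
  have hInt : Integrable h := by
    rw [hh, integrable_indicator_iff measurableSet_Icc]
    exact (Continuous.integrableOn_Icc (by continuity))
  have hIntf : Integrable (fun g : Fin m → ℝ => ∏ i, h (g i)) :=
    Integrable.fintype_prod (fun _ => hInt)
  have hfin : volume (Gset m x) ≠ ⊤ := by
    have hsub : Gset m x ⊆ Set.univ.pi fun _ : Fin m => Set.Icc 0 x := by
      intro g hg i _; exact hg.1 i
    refine ne_of_lt (lt_of_le_of_lt (measure_mono hsub) ?_)
    rw [volume_pi_pi]
    simp [Real.volume_Icc]
  have hB : 0 ≤ Real.exp (m+1) * ((1 - Real.exp (-θ * x)) / θ)^m := by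
    have h1 : Real.exp (-θ * x) ≤ 1 := by
      rw [Real.exp_le_one_iff]
      nlinarith
    have h2 : 0 ≤ (1 - Real.exp (-θ * x)) / θ := div_nonneg (by linarith) hθ.le
    exact mul_nonneg (Real.exp_pos _).le (pow_nonneg h2 m)
  rw [ENNReal.le_ofReal_iff_toReal_le hfin hB]
  have hmono : (volume (Gset m x)).toReal ≤ ∫ g : Fin m → ℝ, Real.exp θ * ∏ i, h (g i) := by
    have hind : (volume (Gset m x)).toReal =
        ∫ g : Fin m → ℝ, (Gset m x).indicator (fun _ => (1:ℝ)) g := by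
      rw [integral_indicator_const (1:ℝ) (measurable_Gset m x)]
      simp
      rfl
    rw [hind]
    refine integral_mono ?_ (hIntf.const_mul _) ?_
    · exact (integrable_indicator_iff (measurable_Gset m x)).mpr
        ((integrableOn_const hfin))
    · intro g
      by_cases hg : g ∈ Gset m x
      · rw [Set.indicator_of_mem hg]
        show 1 ≤ Real.exp θ * ∏ i, h (g i)
        have hval : ∀ i, h (g i) = Real.exp (-θ * g i) := fun i =>
          Set.indicator_of_mem (hg.1 i) _
        rw [Finset.prod_congr rfl fun i _ => hval i, ← Real.exp_sum, ← Real.exp_add]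
        have hsum : ∑ i : Fin m, -θ * g i = -θ * ∑ i, g i := by
          rw [Finset.mul_sum]
        rw [show (θ + ∑ i : Fin m, -θ * g i) = θ * (1 - ∑ i, g i) by rw [hsum]; ring]
        calc (1:ℝ) = Real.exp 0 := Real.exp_zero.symm
          _ ≤ Real.exp (θ * (1 - ∑ i, g i)) := by
              apply Real.exp_le_exp.mpr
              have := hg.2
              nlinarith
      · rw [Set.indicator_of_notMem hg]
        show 0 ≤ Real.exp θ * ∏ i, h (g i)
        have : 0 ≤ ∏ i, h (g i) := by
          apply Finset.prod_nonneg
          intro i _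
          exact Set.indicator_nonneg (fun t _ => (Real.exp_pos _).le) _
        positivity
  refine le_trans hmono ?_
  rw [integral_const_mul, volume_pi, integral_fintype_prod_eq_pow (ι := Fin m) h, hh]
  rw [integral_indicator measurableSet_Icc, exp_neg_integral θ x hθ hx]
  simp [Fintype.card_fin]
  rw [hθdef]


def Dex (m : ℕ) (v : Fin m → ℝ) (j : Fin (m + 1)) : ℝ :=
  (if h : (j : ℕ) < m then v ⟨j, h⟩ else 1) -
    (if h2 : 0 < (j : ℕ) then v ⟨(j : ℕ) - 1, by have := j.isLt; omega⟩ else 0)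

def Tset (m : ℕ) (x : ℝ) : Set (Fin m → ℝ) := {v | Monotone v ∧ ∀ j, Dex m v j ≤ x}

lemma measurable_Tset (m : ℕ) (x : ℝ) : MeasurableSet (Tset m x) := by
  have h1 : MeasurableSet {v : Fin m → ℝ | Monotone v} := by
    have : {v : Fin m → ℝ | Monotone v} =
        ⋂ (i : Fin m), ⋂ (j : Fin m), ⋂ (_ : i ≤ j), {v | v i ≤ v j} := by
      ext v; simp [Monotone, Set.mem_iInter]
    rw [this]
    exact MeasurableSet.iInter fun i => MeasurableSet.iInter fun j =>
      MeasurableSet.iInter fun _ => measurableSet_le (measurable_pi_apply i) (measurable_pi_apply j)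
  have h2 : MeasurableSet {v : Fin m → ℝ | ∀ j, Dex m v j ≤ x} := by
    have : {v : Fin m → ℝ | ∀ j, Dex m v j ≤ x} = ⋂ j, {v | Dex m v j ≤ x} := by
      ext v; simp [Set.mem_iInter]
    rw [this]
    refine MeasurableSet.iInter fun j => ?_
    have hmeas : Measurable fun v : Fin m → ℝ => Dex m v j := by
      apply Measurable.sub
      · by_cases h : (j:ℕ) < m
        · simp only [Dex, dif_pos h]; exact measurable_pi_apply _
        · simp only [Dex, dif_neg h]; exact measurable_const
      · by_cases h : 0 < (j:ℕ)
        · simp only [Dex, dif_pos h]; exact measurable_pi_apply _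
        · simp only [Dex, dif_neg h]; exact measurable_const
    exact measurableSet_le hmeas measurable_const
  exact h1.inter h2

lemma sortedPts_eq_self {m : ℕ} {v : Fin m → ℝ} (hv : Monotone v) : sortedPts v = v := by
  have hid : v ∘ ⇑(1 : Equiv.Perm (Fin m)) = v := rfl
  have h := (Tuple.comp_sort_eq_comp_iff_monotone (f := v) (σ := 1)).mpr (by rw [hid]; exact hv)
  unfold sortedPts
  rw [← h, hid]

lemma cover (m : ℕ) (x : ℝ) :
    {u : Fin m → ℝ | maxSpacing u ≤ x} ⊆
      ⋃ σ : Equiv.Perm (Fin m), (fun u => u ∘ σ) ⁻¹' Tset m x := by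
  intro u hu
  refine Set.mem_iUnion.mpr ⟨Tuple.sort u, ?_⟩
  have hmono : Monotone (u ∘ ⇑(Tuple.sort u)) := Tuple.monotone_sort u
  refine ⟨hmono, fun j => ?_⟩
  have hsp : spacing u j ≤ x :=
    (Finset.sup'_le_iff _ _).mp hu j (Finset.mem_univ j)
  have heq : Dex m (u ∘ ⇑(Tuple.sort u)) j = spacing u j := rfl
  rw [heq]; exact hsp

lemma Tsub (m : ℕ) (hm : 0 < m) (x : ℝ) :
    Tset m x ∩ (Set.univ.pi fun _ => Set.Icc (0:ℝ) 1) ⊆ ⇑(gapMap m) ⁻¹' Gset m x := by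
  rintro v ⟨⟨hmono, hsp⟩, hbox⟩
  have hbox' : ∀ i, v i ∈ Set.Icc (0:ℝ) 1 := fun i => hbox i (Set.mem_univ i)
  constructor
  · intro i
    constructor
    · show (0:ℝ) ≤ v i - _
      by_cases h : 0 < (i:ℕ)
      · rw [dif_pos h]
        have hle : (⟨(i:ℕ) - 1, Nat.lt_of_le_of_lt (Nat.sub_le _ _) i.isLt⟩ : Fin m) ≤ i := by
          rw [Fin.le_def]; exact Nat.sub_le _ _
        linarith [hmono hle]
      · rw [dif_neg h]
        have := (hbox' i).1
        linarith
    · show v i - _ ≤ x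
      have hsp' := hsp (Fin.castSucc i)
      have heq : Dex m v (Fin.castSucc i) = v i - (if h : 0 < (i:ℕ) then
          v ⟨(i:ℕ) - 1, Nat.lt_of_le_of_lt (Nat.sub_le _ _) i.isLt⟩ else 0) := by
        unfold Dex
        rw [dif_pos (by simp : ((Fin.castSucc i : ℕ)) < m)]
        congr 1
      rw [← heq]; exact hsp'
  · show ∑ j, gapMap m v j ≤ 1
    rw [gapMap_sum hm v]; exact (hbox' _).2

lemma core (m : ℕ) (hm : 1 ≤ m) (x : ℝ) (hx : 0 ≤ x) :
    (Ppts m {u | maxSpacing u ≤ x}).toReal ≤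
      (m ! : ℝ) * (Real.exp ((m:ℝ)+1) * ((1 - Real.exp (-((m:ℝ)+1) * x)) / ((m:ℝ)+1))^m) := by
  have hθ : (0:ℝ) < (m:ℝ)+1 := by positivity
  have hB : 0 ≤ Real.exp ((m:ℝ)+1) * ((1 - Real.exp (-((m:ℝ)+1) * x)) / ((m:ℝ)+1))^m := by
    have h1 : Real.exp (-((m:ℝ)+1) * x) ≤ 1 := by
      rw [Real.exp_le_one_iff]; nlinarith
    have h2 : 0 ≤ (1 - Real.exp (-((m:ℝ)+1) * x)) / ((m:ℝ)+1) := div_nonneg (by linarith) hθ.le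
    exact mul_nonneg (Real.exp_pos _).le (pow_nonneg h2 m)
  have hTmeas := measurable_Tset m x
  have hmapmeas : Measurable ⇑(gapMap m) :=
    (gapMap m).continuous_of_finiteDimensional.measurable
  have hdet : LinearMap.det (gapMap m) ≠ 0 := by rw [gapMap_det]; norm_num
  have hTbound : Ppts m (Tset m x) ≤
      ENNReal.ofReal (Real.exp ((m:ℝ)+1) * ((1 - Real.exp (-((m:ℝ)+1) * x)) / ((m:ℝ)+1))^m) := by
    rw [ppts_eq, Measure.restrict_apply hTmeas]
    calc volume (Tset m x ∩ Set.univ.pi fun _ => Set.Icc (0:ℝ) 1)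
        ≤ volume (⇑(gapMap m) ⁻¹' Gset m x) := measure_mono (Tsub m (by omega) x)
      _ = (volume.map ⇑(gapMap m)) (Gset m x) :=
          (Measure.map_apply hmapmeas (measurable_Gset m x)).symm
      _ = volume (Gset m x) := by
          rw [Real.map_linearMap_volume_pi_eq_smul_volume_pi hdet, gapMap_det]; simp
      _ ≤ _ := by
          have := chernoff m x hx
          convert this using 3 <;> push_cast <;> ring
  have hchain : Ppts m {u | maxSpacing u ≤ x} ≤ (m ! : ENNReal) *
      ENNReal.ofReal (Real.exp ((m:ℝ)+1) * ((1 - Real.exp (-((m:ℝ)+1) * x)) / ((m:ℝ)+1))^m) := by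
    calc Ppts m {u | maxSpacing u ≤ x}
        ≤ Ppts m (⋃ σ : Equiv.Perm (Fin m), (fun u => u ∘ σ) ⁻¹' Tset m x) :=
          measure_mono (cover m x)
      _ ≤ ∑' σ : Equiv.Perm (Fin m), Ppts m ((fun u => u ∘ σ) ⁻¹' Tset m x) :=
          measure_iUnion_le _
      _ = ∑' σ : Equiv.Perm (Fin m), Ppts m (Tset m x) :=
          tsum_congr fun σ =>
            (measurePreserving_comp_perm m σ).measure_preimage hTmeas.nullMeasurableSet
      _ = (m ! : ENNReal) * Ppts m (Tset m x) := by
          rw [tsum_fintype, Finset.sum_const, Finset.card_univ, Fintype.card_perm,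
            Fintype.card_fin, nsmul_eq_mul]
      _ ≤ _ := by gcongr
  have heq : (m ! : ENNReal) *
      ENNReal.ofReal (Real.exp ((m:ℝ)+1) * ((1 - Real.exp (-((m:ℝ)+1) * x)) / ((m:ℝ)+1))^m) =
      ENNReal.ofReal ((m ! : ℝ) *
        (Real.exp ((m:ℝ)+1) * ((1 - Real.exp (-((m:ℝ)+1) * x)) / ((m:ℝ)+1))^m)) := by
    rw [ENNReal.ofReal_mul (show (0:ℝ) ≤ (m ! : ℝ) by positivity), ENNReal.ofReal_natCast]
  exact ENNReal.toReal_le_of_le_ofReal (mul_nonneg (by positivity) hB) (heq ▸ hchain)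

lemma step2 (m : ℕ) (hm : 1 ≤ m) (t : ℝ) (ht0 : 0 ≤ t) (ht1 : t ≤ 1) :
    (m ! : ℝ) * (Real.exp ((m:ℝ)+1) * ((1 - t) / ((m:ℝ)+1))^m) ≤
      ((m:ℝ)+1) * Real.exp 2 * Real.exp (-((m:ℝ) * t)) := by
  have hmR : (1:ℝ) ≤ (m:ℝ) := by exact_mod_cast hm
  have hℓ : (0:ℝ) < (m:ℝ)+1 := by positivity
  have h1 : (m ! : ℝ) ≤ (m:ℝ)^(m+1) * Real.exp (1 - (m:ℝ)) := fact_le m hm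
  have h2 : ((1 - t)/((m:ℝ)+1))^m = (1-t)^m / ((m:ℝ)+1)^m := div_pow _ _ m
  have h3 : (1-t)^m ≤ Real.exp (-((m:ℝ) * t)) := by
    have hb : 1 - t ≤ Real.exp (-t) := by linarith [Real.add_one_le_exp (-t)]
    calc (1-t)^m ≤ Real.exp (-t)^m := pow_le_pow_left₀ (by linarith) hb m
      _ = Real.exp (-((m:ℝ) * t)) := by
          rw [← Real.exp_nat_mul]; ring_nf
  have h4 : (m:ℝ)^(m+1) / ((m:ℝ)+1)^m ≤ (m:ℝ)+1 := by
    have hp : (m:ℝ)^m ≤ ((m:ℝ)+1)^m := pow_le_pow_left₀ (by positivity) (by linarith) m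
    rw [div_le_iff₀ (pow_pos hℓ m)]
    calc (m:ℝ)^(m+1) = (m:ℝ) * (m:ℝ)^m := by ring
      _ ≤ ((m:ℝ)+1) * ((m:ℝ)+1)^m :=
          mul_le_mul (by linarith) hp (by positivity) (by positivity)
  have e2 : Real.exp (1 - (m:ℝ)) * Real.exp ((m:ℝ)+1) = Real.exp 2 := by
    rw [← Real.exp_add]; ring_nf
  have hfrac : 0 ≤ (1-t)^m / ((m:ℝ)+1)^m := div_nonneg (pow_nonneg (by linarith) m) (by positivity)
  calc (m ! : ℝ) * (Real.exp ((m:ℝ)+1) * ((1 - t)/((m:ℝ)+1))^m)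
      = (m ! : ℝ) * Real.exp ((m:ℝ)+1) * ((1-t)^m / ((m:ℝ)+1)^m) := by rw [h2]; ring
    _ ≤ ((m:ℝ)^(m+1) * Real.exp (1 - (m:ℝ))) * Real.exp ((m:ℝ)+1) * ((1-t)^m / ((m:ℝ)+1)^m) := by
        apply mul_le_mul_of_nonneg_right _ hfrac
        exact mul_le_mul_of_nonneg_right h1 (Real.exp_pos _).le
    _ = ((m:ℝ)^(m+1) / ((m:ℝ)+1)^m) * Real.exp 2 * (1-t)^m := by rw [← e2]; ring
    _ ≤ (((m:ℝ)+1) * Real.exp 2) * Real.exp (-((m:ℝ) * t)) := by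
        apply mul_le_mul _ h3 (pow_nonneg (by linarith) m) (by positivity)
        exact mul_le_mul_of_nonneg_right h4 (Real.exp_pos _).le
    _ = ((m:ℝ)+1) * Real.exp 2 * Real.exp (-((m:ℝ) * t)) := by ring

/-- For the maximal spacing `L_ℓ⁺` of `ℓ-1` i.i.d. uniform points (here `ℓ = m+1`):
for every `ρ > 0` and `d ∈ (0, e^ρ - 1)`,
`P(L_ℓ⁺ ≤ ℓ⁻¹(log(ℓ/log ℓ) - ρ)) = O(ℓ^{-d})` as `ℓ → ∞`. -/
theorem maxSpacing_lower_tail (ρ : ℝ) (hρ : 0 < ρ) (d : ℝ) (hd0 : 0 < d)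
    (hd : d < Real.exp ρ - 1) :
    ∃ C : ℝ, ∀ᶠ m : ℕ in atTop,
      (Ppts m {u | maxSpacing u ≤
          ((m + 1 : ℝ))⁻¹ * (Real.log ((m + 1 : ℝ) / Real.log (m + 1 : ℝ)) - ρ)}).toReal
        ≤ C * ((m + 1 : ℝ)) ^ (-d) := by
  refine ⟨1, ?_⟩
  set ε := Real.exp ρ - 1 - d with hεdef
  have hεpos : 0 < ε := by simp only [hεdef]; linarith
  have hℓtd : Tendsto (fun m : ℕ => ((m:ℝ)+1)) atTop atTop :=
    tendsto_atTop_add_const_right _ 1 tendsto_natCast_atTop_atTop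
  have hlogtd : Tendsto (fun m : ℕ => Real.log ((m:ℝ)+1)) atTop atTop :=
    Real.tendsto_log_atTop.comp hℓtd
  have h1 : ∀ᶠ m : ℕ in atTop, 1 ≤ Real.log ((m:ℝ)+1) := hlogtd.eventually_ge_atTop 1
  have h2 : ∀ᶠ m : ℕ in atTop, ρ ≤ Real.log (((m:ℝ)+1) / Real.log ((m:ℝ)+1)) := by
    have key : ∀ᶠ m : ℕ in atTop, (1/2) * Real.log ((m:ℝ)+1) - Real.log 2 ≤
        Real.log (((m:ℝ)+1)/Real.log ((m:ℝ)+1)) := by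
      filter_upwards [h1, hℓtd.eventually_ge_atTop 1] with m hl1 hm1
      have hℓpos : (0:ℝ) < (m:ℝ)+1 := by linarith
      have hlogpos : (0:ℝ) < Real.log ((m:ℝ)+1) := by linarith
      have hsq : 0 < Real.sqrt ((m:ℝ)+1) := Real.sqrt_pos.mpr hℓpos
      have hls : Real.log (Real.sqrt ((m:ℝ)+1)) = Real.log ((m:ℝ)+1) / 2 :=
        Real.log_sqrt hℓpos.le
      have hlogle : Real.log ((m:ℝ)+1) ≤ 2 * Real.sqrt ((m:ℝ)+1) := by
        have := Real.log_le_sub_one_of_pos hsq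
        nlinarith [hsq]
      have hdivge : Real.sqrt ((m:ℝ)+1) / 2 ≤ ((m:ℝ)+1) / Real.log ((m:ℝ)+1) := by
        rw [div_le_div_iff₀ two_pos hlogpos]
        have hsqsq : Real.sqrt ((m:ℝ)+1) * Real.sqrt ((m:ℝ)+1) = (m:ℝ)+1 :=
          Real.mul_self_sqrt hℓpos.le
        nlinarith [hsq, hlogle]
      have hmono := Real.log_le_log (by positivity) hdivge
      have hlog2 : Real.log (Real.sqrt ((m:ℝ)+1) / 2) =
          (1/2) * Real.log ((m:ℝ)+1) - Real.log 2 := by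
        rw [Real.log_div hsq.ne' two_ne_zero, hls]; ring
      linarith [hlog2 ▸ hmono]
    have htd : Tendsto (fun m : ℕ => (1/2) * Real.log ((m:ℝ)+1) - Real.log 2) atTop atTop := by
      apply tendsto_atTop_add_const_right
      exact hlogtd.const_mul_atTop (by norm_num)
    filter_upwards [key, htd.eventually_ge_atTop ρ] with m hk hr
    linarith
  have hquot : Tendsto (fun m : ℕ => Real.exp ρ * (Real.log ((m:ℝ)+1) / ((m:ℝ)+1)))
      atTop (nhds 0) := by
    have h0 : Tendsto (fun m : ℕ => Real.log ((m:ℝ)+1) / ((m:ℝ)+1)) atTop (nhds 0) :=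
      (Real.isLittleO_log_id_atTop.tendsto_div_nhds_zero).comp hℓtd
    simpa using h0.const_mul (Real.exp ρ)
  have hLHS : Tendsto (fun m : ℕ =>
      Real.exp 2 * Real.exp (Real.exp ρ * (Real.log ((m:ℝ)+1) / ((m:ℝ)+1))))
      atTop (nhds (Real.exp 2 * Real.exp 0)) :=
    ((Real.continuous_exp.continuousAt.tendsto).comp hquot).const_mul _
  have hRHS : Tendsto (fun m : ℕ => ((m:ℝ)+1) ^ ε) atTop atTop :=
    (tendsto_rpow_atTop hεpos).comp hℓtd
  have h3 : ∀ᶠ m : ℕ in atTop,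
      Real.exp 2 * Real.exp (Real.exp ρ * (Real.log ((m:ℝ)+1) / ((m:ℝ)+1))) ≤ ((m:ℝ)+1) ^ ε := by
    have hub : ∀ᶠ m : ℕ in atTop,
        Real.exp 2 * Real.exp (Real.exp ρ * (Real.log ((m:ℝ)+1) / ((m:ℝ)+1))) ≤
          Real.exp 2 * Real.exp 0 + 1 := by
      have : Real.exp 2 * Real.exp 0 < Real.exp 2 * Real.exp 0 + 1 := by linarith
      exact hLHS.eventually (eventually_le_nhds this)
    filter_upwards [hub, hRHS.eventually_ge_atTop (Real.exp 2 * Real.exp 0 + 1)] with m hu hr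
    linarith
  filter_upwards [h1, h2, h3, eventually_ge_atTop 1] with m hlog1 hρle hexp hm
  set ℓ : ℝ := (m:ℝ)+1 with hℓdef
  have hℓpos : (0:ℝ) < ℓ := by positivity
  have hlogpos : (0:ℝ) < Real.log ℓ := by linarith
  set x : ℝ := ℓ⁻¹ * (Real.log (ℓ / Real.log ℓ) - ρ) with hxdef
  have hx : 0 ≤ x := by
    apply mul_nonneg (by positivity)
    linarith
  have hcore := core m hm x hx
  set t : ℝ := Real.exp ρ * (Real.log ℓ / ℓ) with htdef
  have htpos : 0 < t := by positivity
  have hexpeq : Real.exp (-((m:ℝ)+1) * x) = t := by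
    have hℓx : ((m:ℝ)+1) * x = Real.log (ℓ / Real.log ℓ) - ρ := by
      rw [hxdef, ← hℓdef, ← mul_assoc, mul_inv_cancel₀ hℓpos.ne', one_mul]
    rw [show -((m:ℝ)+1) * x = -(((m:ℝ)+1) * x) by ring, hℓx]
    rw [show -(Real.log (ℓ / Real.log ℓ) - ρ) = ρ + -Real.log (ℓ / Real.log ℓ) by ring]
    rw [Real.exp_add, Real.exp_neg, Real.exp_log (by positivity)]
    rw [htdef, inv_div]
  have ht1 : t ≤ 1 := by
    rw [← hexpeq, Real.exp_le_one_iff]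
    have : 0 ≤ ((m:ℝ)+1) * x := mul_nonneg (by positivity) hx
    linarith
  have hstep := step2 m hm t htpos.le ht1
  rw [hexpeq] at hcore
  have hmain : ((m:ℝ)+1) * Real.exp 2 * Real.exp (-((m:ℝ) * t)) ≤ ℓ ^ (-d) := by
    have hmt : (m:ℝ) * t = Real.exp ρ * Real.log ℓ - t := by
      have : (m:ℝ) = ℓ - 1 := by rw [hℓdef]; ring
      rw [this, htdef]
      field_simp
    have hsplit : Real.exp (-((m:ℝ) * t)) = Real.exp (-(Real.exp ρ * Real.log ℓ)) * Real.exp t := by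
      rw [← Real.exp_add, hmt]; ring_nf
    have hℓexp : ℓ = Real.exp (Real.log ℓ) := (Real.exp_log hℓpos).symm
    have hcollect : ℓ * Real.exp 2 * Real.exp (-((m:ℝ) * t)) =
        (Real.exp 2 * Real.exp t) * (ℓ * Real.exp (-(Real.exp ρ * Real.log ℓ))) := by
      rw [hsplit]; ring
    have hpow : ℓ * Real.exp (-(Real.exp ρ * Real.log ℓ)) = ℓ ^ ((1:ℝ) - Real.exp ρ) := by
      rw [Real.rpow_def_of_pos hℓpos]
      nth_rewrite 1 [hℓexp]
      rw [← Real.exp_add]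
      congr 1
      ring
    calc ℓ * Real.exp 2 * Real.exp (-((m:ℝ) * t))
        = (Real.exp 2 * Real.exp t) * ℓ ^ ((1:ℝ) - Real.exp ρ) := by rw [hcollect, hpow]
      _ ≤ ℓ ^ ε * ℓ ^ ((1:ℝ) - Real.exp ρ) := by
          apply mul_le_mul_of_nonneg_right _ (Real.rpow_nonneg hℓpos.le _)
          exact hexp
      _ = ℓ ^ (ε + ((1:ℝ) - Real.exp ρ)) := (Real.rpow_add hℓpos _ _).symm
      _ = ℓ ^ (-d) := by congr 1; rw [hεdef]; ring
  rw [one_mul]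
  exact le_trans hcore (le_trans hstep hmain)
end

section
/- For n ≥ 2 let Φₙ(η) = n log(1 - e^{-η}) - log η on (0, ∞). Then Φₙ'(η) = n/(e^η - 1) - 1/η and Φₙ''(η) = -n/(e^{η/2} - e^{-η/2})² + 1/η². Moreover, for all sufficiently large n, Φₙ is increasing and concave on the interval (0, (log n)/2]. -/
open Real

private lemma one_lt_exp' {x : ℝ} (hx : 0 < x) : 1 < Real.exp x := by
  nlinarith [Real.add_one_le_exp x]

private lemma hasDerivAt_Phi (n : ℕ) {η : ℝ} (hη : 0 < η) :
    HasDerivAt (fun η : ℝ => (n : ℝ) * Real.log (1 - Real.exp (-η)) - Real.log η)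
      ((n : ℝ) / (Real.exp η - 1) - 1 / η) η := by
  have h1 : (1 : ℝ) - Real.exp (-η) > 0 := by
    have : Real.exp (-η) < 1 := by
      rw [Real.exp_lt_one_iff]; linarith
    linarith
  have hexp : HasDerivAt (fun η : ℝ => 1 - Real.exp (-η)) (Real.exp (-η)) η := by
    have := (Real.hasDerivAt_exp (-η)).comp η ((hasDerivAt_neg η))
    exact ((hasDerivAt_const η (1:ℝ)).sub this).congr_deriv (by simp)
  have hlog := (hexp.log h1.ne').const_mul (n : ℝ)
  have hlog2 := Real.hasDerivAt_log hη.ne'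
  have := hlog.sub hlog2
  refine this.congr_deriv ?_
  have he : Real.exp η ≠ 0 := Real.exp_ne_zero η
  have he1 : Real.exp η - 1 > 0 := by
    linarith [one_lt_exp' hη]
  rw [Real.exp_neg]
  rw [Real.exp_neg] at h1
  field_simp

private lemma hasDerivAt_Phi' (n : ℕ) {η : ℝ} (hη : 0 < η) :
    HasDerivAt (fun η : ℝ => (n : ℝ) / (Real.exp η - 1) - 1 / η)
      (-(n : ℝ) / (Real.exp (η / 2) - Real.exp (-(η / 2))) ^ 2 + 1 / η ^ 2) η := by
  have he1 : Real.exp η - 1 > 0 := by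
    linarith [one_lt_exp' hη]
  have h1 : HasDerivAt (fun η : ℝ => Real.exp η - 1) (Real.exp η) η := by
    exact ((Real.hasDerivAt_exp η).sub (hasDerivAt_const η (1:ℝ))).congr_deriv (by simp)
  have hd1 : HasDerivAt (fun η : ℝ => (n : ℝ) / (Real.exp η - 1))
      (-(n : ℝ) * Real.exp η / (Real.exp η - 1) ^ 2) η := by
    have := (hasDerivAt_const η (n:ℝ)).div h1 he1.ne'
    refine this.congr_deriv ?_
    ring
  have hd2 : HasDerivAt (fun η : ℝ => 1 / η) (-(1 / η ^ 2)) η := by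
    simpa [one_div] using hasDerivAt_inv hη.ne'
  have := hd1.sub hd2
  refine this.congr_deriv ?_
  have hs : Real.exp (η / 2) - Real.exp (-(η / 2)) ≠ 0 := by
    have : Real.exp (-(η / 2)) < Real.exp (η / 2) := by
      apply Real.exp_lt_exp.2; linarith
    linarith
  have key : (Real.exp (η / 2) - Real.exp (-(η / 2))) ^ 2
      = (Real.exp η - 1) ^ 2 / Real.exp η := by
    have h2 : Real.exp η = Real.exp (η / 2) ^ 2 := by
      rw [sq, ← Real.exp_add, add_halves]
    have h3 : Real.exp (-(η / 2)) = (Real.exp (η / 2))⁻¹ := Real.exp_neg _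
    have h4 : Real.exp (η / 2) ≠ 0 := Real.exp_ne_zero _
    rw [h2, h3]
    field_simp
  rw [key]
  have he : Real.exp η ≠ 0 := Real.exp_ne_zero η
  field_simp
  ring

private lemma exp_bound {n : ℕ} (hn : 2 ≤ n) {x : ℝ} (hx : 0 < x)
    (hx2 : x ≤ Real.log n / 2) : Real.exp x < (n : ℝ) ∧ Real.exp x - 1 ≤ x * Real.exp x := by
  have hn1 : (1:ℝ) < n := by exact_mod_cast Nat.lt_of_lt_of_le one_lt_two hn
  have hn0 : (0:ℝ) < n := by linarith
  constructor
  · have h1 : Real.exp x ≤ Real.exp (Real.log n / 2) := Real.exp_le_exp.2 hx2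
    have h2 : Real.exp (Real.log n / 2) ^ 2 = (n : ℝ) := by
      rw [sq, ← Real.exp_add, add_halves, Real.exp_log hn0]
    have h3 : (1:ℝ) < Real.exp (Real.log n / 2) :=
      one_lt_exp' (by have := Real.log_pos hn1; linarith)
    nlinarith [Real.exp_pos x]
  · have h5 : Real.exp (-x) * Real.exp x = 1 := by rw [← Real.exp_add]; simp
    nlinarith [mul_le_mul_of_nonneg_right (Real.add_one_le_exp (-x)) (Real.exp_pos x).le, h5]

/-- For `n ≥ 2` let `Φₙ(η) = n log(1 - e^{-η}) - log η` on `(0,∞)`. Then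
`Φₙ'(η) = n/(e^η - 1) - 1/η`, `Φₙ''(η) = -n/(e^{η/2} - e^{-η/2})² + 1/η²`, and for all
sufficiently large `n`, `Φₙ` is increasing and concave on `(0, (log n)/2]`. -/
theorem Phi_derivs_monotone_concave :
    (∀ n : ℕ, 2 ≤ n → ∀ η : ℝ, 0 < η →
      HasDerivAt (fun η : ℝ => (n : ℝ) * Real.log (1 - Real.exp (-η)) - Real.log η)
        ((n : ℝ) / (Real.exp η - 1) - 1 / η) η) ∧
    (∀ n : ℕ, 2 ≤ n → ∀ η : ℝ, 0 < η →
      HasDerivAt (fun η : ℝ => (n : ℝ) / (Real.exp η - 1) - 1 / η)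
        (-(n : ℝ) / (Real.exp (η / 2) - Real.exp (-(η / 2))) ^ 2 + 1 / η ^ 2) η) ∧
    (∃ N : ℕ, ∀ n : ℕ, N ≤ n →
      StrictMonoOn (fun η : ℝ => (n : ℝ) * Real.log (1 - Real.exp (-η)) - Real.log η)
        (Set.Ioc 0 (Real.log n / 2)) ∧
      ConcaveOn ℝ (Set.Ioc 0 (Real.log n / 2))
        (fun η : ℝ => (n : ℝ) * Real.log (1 - Real.exp (-η)) - Real.log η)) := by
  refine ⟨fun n _ η hη => hasDerivAt_Phi n hη, fun n _ η hη => hasDerivAt_Phi' n hη, 2, ?_⟩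
  intro n hn
  set D : Set ℝ := Set.Ioc 0 (Real.log n / 2) with hD
  have hconv : Convex ℝ D := convex_Ioc _ _
  have hint : interior D = Set.Ioo 0 (Real.log n / 2) := interior_Ioc
  have hcont : ContinuousOn (fun η : ℝ => (n : ℝ) * Real.log (1 - Real.exp (-η)) - Real.log η) D :=
    fun x hx => ((hasDerivAt_Phi n hx.1).continuousAt).continuousWithinAt
  -- positivity of first derivative on interior
  have hpos : ∀ x ∈ interior D, 0 < (n : ℝ) / (Real.exp x - 1) - 1 / x := by
    intro x hx
    rw [hint] at hx
    obtain ⟨hx0, hx1⟩ := hx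
    obtain ⟨hlt, hle⟩ := exp_bound hn hx0 hx1.le
    have he1 : Real.exp x - 1 > 0 := by
      linarith [one_lt_exp' hx0]
    rw [sub_pos, div_lt_div_iff₀ hx0 he1]
    nlinarith [Real.exp_pos x]
  -- nonpositivity of second derivative on interior
  have hneg : ∀ x ∈ interior D,
      -(n : ℝ) / (Real.exp (x / 2) - Real.exp (-(x / 2))) ^ 2 + 1 / x ^ 2 ≤ 0 := by
    intro x hx
    rw [hint] at hx
    obtain ⟨hx0, hx1⟩ := hx
    obtain ⟨hlt, hle⟩ := exp_bound hn hx0 hx1.le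
    have hs : 0 < Real.exp (x / 2) - Real.exp (-(x / 2)) := by
      have : Real.exp (-(x / 2)) < Real.exp (x / 2) := by
        apply Real.exp_lt_exp.2; linarith
      linarith
    have key : Real.exp (x / 2) - Real.exp (-(x / 2)) ≤ x * Real.exp (x / 2) := by
      have h3 : Real.exp (-(x / 2)) = (Real.exp (x / 2))⁻¹ := Real.exp_neg _
      have h2 : Real.exp x = Real.exp (x / 2) ^ 2 := by
        rw [sq, ← Real.exp_add, add_halves]
      have h4 : (0:ℝ) < Real.exp (x / 2) := Real.exp_pos _
      rw [h3]
      rw [h2] at hle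
      rw [← sub_nonneg]
      have : x * Real.exp (x / 2) - (Real.exp (x / 2) - (Real.exp (x / 2))⁻¹)
          = (x * Real.exp (x / 2) ^ 2 - (Real.exp (x / 2) ^ 2 - 1)) / Real.exp (x / 2) := by
        field_simp
      rw [this]
      apply div_nonneg _ h4.le
      nlinarith
    have hsq : (Real.exp (x / 2) - Real.exp (-(x / 2))) ^ 2 ≤ (n : ℝ) * x ^ 2 := by
      have h2 : Real.exp x = Real.exp (x / 2) ^ 2 := by
        rw [sq, ← Real.exp_add, add_halves]
      nlinarith [Real.exp_pos (x / 2), hs]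
    have h1x : 1 / x ^ 2 ≤ (n : ℝ) / (Real.exp (x / 2) - Real.exp (-(x / 2))) ^ 2 := by
      rw [div_le_div_iff₀ (by positivity) (by positivity)]
      linarith
    have : -(n : ℝ) / (Real.exp (x / 2) - Real.exp (-(x / 2))) ^ 2
        = -((n : ℝ) / (Real.exp (x / 2) - Real.exp (-(x / 2))) ^ 2) := by ring
    rw [this]
    linarith
  constructor
  · apply strictMonoOn_of_deriv_pos hconv hcont
    intro x hx
    have hx0 : 0 < x := by rw [hint] at hx; exact hx.1
    rw [(hasDerivAt_Phi n hx0).deriv]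
    exact hpos x hx
  · apply concaveOn_of_hasDerivWithinAt2_nonpos hconv hcont
      (f' := fun η : ℝ => (n : ℝ) / (Real.exp η - 1) - 1 / η)
      (f'' := fun η : ℝ =>
        -(n : ℝ) / (Real.exp (η / 2) - Real.exp (-(η / 2))) ^ 2 + 1 / η ^ 2)
    · intro x hx
      have hx0 : 0 < x := by rw [hint] at hx; exact hx.1
      exact (hasDerivAt_Phi n hx0).hasDerivWithinAt
    · intro x hx
      have hx0 : 0 < x := by rw [hint] at hx; exact hx.1
      exact (hasDerivAt_Phi' n hx0).hasDerivWithinAt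
    · exact hneg
end

section
/- For every s > 0 and n ≥ 1, ∫_0^{ps} exp(-η - 2η²/n) dη ≥ (1 - e^{-ps}) e^{-4/n} for all p > 0. -/
/-- For every `s > 0`, `n ≥ 1` and `p > 0`,
`∫₀^{ps} exp(-η - 2η²/n) dη ≥ (1 - e^{-ps}) e^{-4/n}`. -/
theorem integral_exp_quadratic_lower (s : ℝ) (hs : 0 < s) (n : ℕ) (hn : 1 ≤ n)
    (p : ℝ) (hp : 0 < p) :
    (1 - Real.exp (-(p * s))) * Real.exp (-(4 / n)) ≤
      ∫ η in (0 : ℝ)..(p * s), Real.exp (-η - 2 * η ^ 2 / n) := by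
  set N : ℝ := (n : ℝ) with hNdef
  have hN : (1 : ℝ) ≤ N := Nat.one_le_cast.mpr hn
  have hN0 : (0 : ℝ) < N := lt_of_lt_of_le one_pos hN
  set T : ℝ := p * s with hTdef
  have hT : 0 < T := mul_pos hp hs
  set C : ℝ := Real.exp (-(4 / N)) with hCdef
  have hC0 : 0 < C := Real.exp_pos _
  set g : ℝ → ℝ := fun η => C * (Real.exp (-η) * (1 + 4 / N - 2 * η ^ 2 / N)) with hg
  set G : ℝ → ℝ := fun η =>
    C * (-(1 + 4 / N) * Real.exp (-η) + (2 / N) * (Real.exp (-η) * (η ^ 2 + 2 * η + 2)))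
    with hG
  have hderiv : ∀ η ∈ Set.uIcc (0 : ℝ) T, HasDerivAt G (g η) η := by
    intro η _
    have h1 : HasDerivAt (fun x : ℝ => Real.exp (-x)) (-Real.exp (-η)) η := by
      simpa [Function.comp_def] using (Real.hasDerivAt_exp (-η)).comp η (hasDerivAt_neg η)
    have h2 : HasDerivAt (fun x : ℝ => x ^ 2 + 2 * x + 2) (2 * η + 2) η := by
      have := ((hasDerivAt_pow 2 η).add (((hasDerivAt_id η).const_mul 2).add_const 2))
      simpa [add_assoc, Pi.add_def] using this
    have h3 : HasDerivAt (fun x : ℝ => Real.exp (-x) * (x ^ 2 + 2 * x + 2))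
        (-Real.exp (-η) * (η ^ 2 + 2 * η + 2) + Real.exp (-η) * (2 * η + 2)) η :=
      h1.mul h2
    have h4 := ((h1.const_mul (-(1 + 4 / N))).add (h3.const_mul (2 / N))).const_mul C
    refine h4.congr_deriv ?_
    show _ = C * (Real.exp (-η) * (1 + 4 / N - 2 * η ^ 2 / N))
    field_simp
    ring
  have hint : ∫ η in (0 : ℝ)..T, g η = G T - G 0 := by
    apply intervalIntegral.integral_eq_sub_of_hasDerivAt hderiv
    apply Continuous.intervalIntegrable
    fun_prop
  have hcont : Continuous fun η : ℝ => Real.exp (-η - 2 * η ^ 2 / N) := by fun_prop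
  have hmono : ∫ η in (0 : ℝ)..T, g η ≤ ∫ η in (0 : ℝ)..T, Real.exp (-η - 2 * η ^ 2 / N) := by
    apply intervalIntegral.integral_mono_on hT.le
    · exact (Continuous.intervalIntegrable (by fun_prop) _ _)
    · exact hcont.intervalIntegrable _ _
    · intro η _
      have key : 1 + (4 / N - 2 * η ^ 2 / N) ≤ Real.exp (4 / N - 2 * η ^ 2 / N) := by
        linarith [Real.add_one_le_exp (4 / N - 2 * η ^ 2 / N)]
      have h5 : C * (1 + 4 / N - 2 * η ^ 2 / N) ≤ Real.exp (-(2 * η ^ 2 / N)) := by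
        calc C * (1 + 4 / N - 2 * η ^ 2 / N)
            ≤ C * Real.exp (4 / N - 2 * η ^ 2 / N) := by
              apply mul_le_mul_of_nonneg_left _ hC0.le
              linarith
          _ = Real.exp (-(2 * η ^ 2 / N)) := by
              rw [hCdef, ← Real.exp_add]; ring_nf
      calc g η = Real.exp (-η) * (C * (1 + 4 / N - 2 * η ^ 2 / N)) := by rw [hg]; ring
        _ ≤ Real.exp (-η) * Real.exp (-(2 * η ^ 2 / N)) :=
            mul_le_mul_of_nonneg_left h5 (Real.exp_pos _).le
        _ = Real.exp (-η - 2 * η ^ 2 / N) := by rw [← Real.exp_add]; ring_nf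
  have hval : (1 - Real.exp (-T)) * C ≤ G T - G 0 := by
    have hET : 0 < Real.exp (-T) := Real.exp_pos _
    have hextra : 0 ≤ (2 / N) * (Real.exp (-T) * (T ^ 2 + 2 * T)) := by positivity
    have heq : G T - G 0 =
        (1 - Real.exp (-T)) * C + C * ((2 / N) * (Real.exp (-T) * (T ^ 2 + 2 * T))) := by
      simp only [hG]
      rw [show Real.exp (-(0:ℝ)) = 1 from by norm_num]
      field_simp
      ring
    have hpos : 0 ≤ C * ((2 / N) * (Real.exp (-T) * (T ^ 2 + 2 * T))) := by positivity
    linarith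
  calc (1 - Real.exp (-T)) * C ≤ G T - G 0 := hval
    _ = ∫ η in (0 : ℝ)..T, g η := hint.symm
    _ ≤ ∫ η in (0 : ℝ)..T, Real.exp (-η - 2 * η ^ 2 / N) := hmono
end
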